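/- arXiv:1701.04995 — 9 statements merged into one kernel-verified Lean document; each statement's English description precedes it below -/
import Mathlib

section
/- Let μ be a nontrivial positive measure on the unit circle T, let w ∈ ℂ with |w| ≥ 1, and let f be a μ-integrable function on T such that ∫_T ζ̄ |f(ζ)| (1 - w̄ζ) dμ(ζ) = 0. Then f = 0 μ-almost everywhere if |w| > 1, and f = 0 μ-almost everywhere on T \ {w} if |w| = 1. -/
open MeasureTheory Complex

/-- Lemma 2.1(ii): if `μ` is a nontrivial positive measure on the unit circle, `|w| ≥ 1`,
and `∫ ζ̄ |f(ζ)| (1 - w̄ζ) dμ(ζ) = 0`, then `f = 0` μ-a.e. when `|w| > 1`,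
and `f = 0` μ-a.e. on `𝕋 \ {w}` when `|w| = 1`. -/
theorem lemma_positive_ii
    (μ : Measure ℂ) [IsFiniteMeasure μ]
    (hcirc : ∀ᵐ ζ ∂μ, ‖ζ‖ = 1)
    (hnt : Set.Infinite {ζ : ℂ | ∀ ε > 0, μ (Metric.ball ζ ε) ≠ 0})
    (w : ℂ) (hw : 1 ≤ ‖w‖)
    (f : ℂ → ℂ) (hf : Integrable f μ)
    (hzero : ∫ ζ, (starRingEnd ℂ) ζ * (‖f ζ‖ : ℂ) * (1 - (starRingEnd ℂ) w * ζ) ∂μ = 0) :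
    (1 < ‖w‖ → f =ᵐ[μ] 0) ∧ (‖w‖ = 1 → ∀ᵐ ζ ∂μ, ζ ≠ w → f ζ = 0) := by
  set c : ℝ := ‖w‖ ^ 2 with hc
  have hwc : w * (starRingEnd ℂ) w = (c : ℂ) := by
    rw [Complex.mul_conj]
    norm_cast
    rw [hc, ← Complex.sq_norm]
  -- a.e. pointwise identity relating the integrand to |f| (ζ̄ - w̄)
  have hζ1 : ∀ᵐ ζ ∂μ, (starRingEnd ℂ) ζ * (‖f ζ‖ : ℂ) * (1 - (starRingEnd ℂ) w * ζ)
      = (‖f ζ‖ : ℂ) * ((starRingEnd ℂ) ζ - (starRingEnd ℂ) w) := by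
    filter_upwards [hcirc] with ζ hζ
    have h1 : (starRingEnd ℂ) ζ * ζ = 1 := by
      rw [mul_comm, Complex.mul_conj]
      norm_cast
      simp [← Complex.sq_norm, hζ]
    linear_combination (-(‖f ζ‖ : ℂ) * (starRingEnd ℂ) w) * h1
  have h1int : ∫ ζ, (‖f ζ‖ : ℂ) * ((starRingEnd ℂ) ζ - (starRingEnd ℂ) w) ∂μ = 0 :=
    (integral_congr_ae hζ1).symm.trans hzero
  -- multiply by w
  set F : ℂ → ℂ := fun ζ => (‖f ζ‖ : ℂ) * (w * (starRingEnd ℂ) ζ - (c : ℂ)) with hF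
  have h2 : ∫ ζ, F ζ ∂μ = 0 := by
    have heq : ∀ ζ, F ζ = w * ((‖f ζ‖ : ℂ) * ((starRingEnd ℂ) ζ - (starRingEnd ℂ) w)) := by
      intro ζ
      simp only [hF]
      linear_combination (‖f ζ‖ : ℂ) * hwc
    calc ∫ ζ, F ζ ∂μ
        = ∫ ζ, w * ((‖f ζ‖ : ℂ) * ((starRingEnd ℂ) ζ - (starRingEnd ℂ) w)) ∂μ := by
          simp only [heq]
      _ = w * ∫ ζ, (‖f ζ‖ : ℂ) * ((starRingEnd ℂ) ζ - (starRingEnd ℂ) w) ∂μ :=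
          integral_const_mul w _
      _ = 0 := by rw [h1int, mul_zero]
  -- integrability of F
  have hFmeas : AEStronglyMeasurable F μ := by
    apply AEStronglyMeasurable.mul
    · exact (Complex.continuous_ofReal.comp_aestronglyMeasurable hf.aestronglyMeasurable.norm)
    · exact (Continuous.aestronglyMeasurable (by continuity))
  have hFint : Integrable F μ := by
    refine Integrable.mono' (hf.norm.const_mul (‖w‖ + |c|)) hFmeas ?_
    filter_upwards [hcirc] with ζ hζ
    simp only [hF, norm_mul]
    rw [Complex.norm_real, Real.norm_eq_abs, abs_norm]
    have hb : ‖w * (starRingEnd ℂ) ζ - (c : ℂ)‖ ≤ ‖w‖ + |c| := by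
      refine (norm_sub_le _ _).trans ?_
      gcongr
      · rw [norm_mul, RCLike.norm_conj, hζ, mul_one]
      · rw [Complex.norm_real, Real.norm_eq_abs]
    calc ‖f ζ‖ * ‖w * (starRingEnd ℂ) ζ - (c : ℂ)‖ ≤ ‖f ζ‖ * (‖w‖ + |c|) := by gcongr
      _ = (‖w‖ + |c|) * ‖f ζ‖ := mul_comm _ _
  -- take real parts; consider the nonnegative function g
  set g : ℂ → ℝ := fun ζ => ‖f ζ‖ * (c - (w * (starRingEnd ℂ) ζ).re) with hg
  have hgF : g = fun ζ => -(F ζ).re := by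
    funext ζ
    simp only [hg, hF, Complex.mul_re, Complex.sub_re, Complex.ofReal_re, Complex.ofReal_im,
      Complex.sub_im]
    ring
  have hgint : Integrable g μ := by
    rw [hgF]; exact hFint.re.neg
  have h3 : ∫ ζ, (F ζ).re ∂μ = (∫ ζ, F ζ ∂μ).re := by
    have := integral_re (μ := μ) (f := F) hFint
    simpa only [RCLike.re_to_complex] using this
  have hgzero : ∫ ζ, g ζ ∂μ = 0 := by
    rw [hgF, integral_neg, h3, h2]
    simp
  have hgnonneg : 0 ≤ᵐ[μ] g := by
    filter_upwards [hcirc] with ζ hζ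
    have hre_le : (w * (starRingEnd ℂ) ζ).re ≤ ‖w‖ := by
      calc (w * (starRingEnd ℂ) ζ).re ≤ ‖w * (starRingEnd ℂ) ζ‖ :=
            Complex.re_le_norm _
        _ = ‖w‖ := by
            rw [norm_mul, RCLike.norm_conj, hζ, mul_one]
    have hwc2 : ‖w‖ ≤ c := by rw [hc]; nlinarith
    simp only [hg, Pi.zero_apply]
    exact mul_nonneg (norm_nonneg _) (by linarith)
  have hgae : g =ᵐ[μ] 0 := by
    rwa [← integral_eq_zero_iff_of_nonneg_ae hgnonneg hgint]
  constructor
  · intro hw1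
    filter_upwards [hgae, hcirc] with ζ hgζ hζ
    have hre_le : (w * (starRingEnd ℂ) ζ).re ≤ ‖w‖ := by
      calc (w * (starRingEnd ℂ) ζ).re ≤ ‖w * (starRingEnd ℂ) ζ‖ :=
            Complex.re_le_norm _
        _ = ‖w‖ := by
            rw [norm_mul, RCLike.norm_conj, hζ, mul_one]
    have hlt : (w * (starRingEnd ℂ) ζ).re < c := by
      rw [hc]; nlinarith
    simp only [hg, Pi.zero_apply] at hgζ
    have : ‖f ζ‖ = 0 := by
      rcases mul_eq_zero.1 hgζ with h | h
      · exact h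
      · exfalso; linarith
    simpa using this
  · intro hw1
    filter_upwards [hgae, hcirc] with ζ hgζ hζ hne
    simp only [hg, Pi.zero_apply] at hgζ
    rcases mul_eq_zero.1 hgζ with h | h
    · simpa using h
    · exfalso
      -- then re (w ζ̄) = c = 1, and |w ζ̄| = 1, so w ζ̄ = 1 and ζ = w
      have hc1 : c = 1 := by rw [hc, hw1]; norm_num
      have hre1 : (w * (starRingEnd ℂ) ζ).re = 1 := by linarith [sub_eq_zero.1 (by linarith : c - (w * (starRingEnd ℂ) ζ).re = 0)]
      have habs : ‖w * (starRingEnd ℂ) ζ‖ = 1 := by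
        rw [norm_mul, RCLike.norm_conj, hζ, hw1, mul_one]
      have hnormSq : Complex.normSq (w * (starRingEnd ℂ) ζ) = 1 := by
        rw [← Complex.sq_norm, habs]; norm_num
      have him : (w * (starRingEnd ℂ) ζ).im = 0 := by
        have := Complex.normSq_apply (w * (starRingEnd ℂ) ζ)
        nlinarith [this, hnormSq, hre1]
      have heq1 : w * (starRingEnd ℂ) ζ = 1 := by
        apply Complex.ext <;> simp [hre1, him]
      have hζζ : (starRingEnd ℂ) ζ * ζ = 1 := by
        rw [mul_comm, Complex.mul_conj]
        norm_cast
        simp [← Complex.sq_norm, hζ]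
      apply hne
      calc ζ = (w * (starRingEnd ℂ) ζ) * ζ := by rw [heq1, one_mul]
        _ = w * ((starRingEnd ℂ) ζ * ζ) := by ring
        _ = w := by rw [hζζ, mul_one]
end

section
/- Let φ_n be the orthonormal polynomials for a nontrivial positive measure μ on the unit circle, and K_n(z,w;μ) = Σ_{j=0}^n conj(φ_j(w;μ)) φ_j(z;μ) the Christoffel–Darboux kernel. If |w| > 1, then every zero z of the polynomial z ↦ K_n(z,w;μ) satisfies |z| < 1. -/
open MeasureTheory Complex Polynomial

/-- The Christoffel–Darboux kernel built from a family of polynomials. -/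
noncomputable def CDkernel (φ : ℕ → Polynomial ℂ) (n : ℕ) (z w : ℂ) : ℂ :=
  ∑ j ∈ Finset.range (n + 1), (starRingEnd ℂ) ((φ j).eval w) * (φ j).eval z

/-- `φ` is the sequence of orthonormal polynomials (with positive leading coefficients)
of the measure `μ` on the unit circle. -/
def IsOPUC (μ : Measure ℂ) (φ : ℕ → Polynomial ℂ) : Prop :=
  (∀ n, (φ n).degree = n) ∧
  (∀ n, 0 < ((φ n).leadingCoeff).re ∧ ((φ n).leadingCoeff).im = 0) ∧
  (∀ m n, ∫ ζ, (starRingEnd ℂ) ((φ m).eval ζ) * (φ n).eval ζ ∂μ =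
    if m = n then 1 else 0)

private lemma poly_eval_bound (f : Polynomial ℂ) :
    ∃ C : ℝ, ∀ ζ : ℂ, ‖ζ‖ = 1 → ‖f.eval ζ‖ ≤ C := by
  refine ⟨∑ i ∈ Finset.range (f.natDegree + 1), ‖f.coeff i‖, fun ζ hζ => ?_⟩
  rw [Polynomial.eval_eq_sum_range]
  refine (norm_sum_le _ _).trans (Finset.sum_le_sum fun i _ => ?_)
  rw [norm_mul, norm_pow, hζ, one_pow, mul_one]

private lemma integrable_conj_mul (μ : Measure ℂ) [IsFiniteMeasure μ]
    (hcirc : ∀ᵐ ζ ∂μ, ‖ζ‖ = 1) (f g : Polynomial ℂ) :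
    Integrable (fun ζ => (starRingEnd ℂ) (f.eval ζ) * g.eval ζ) μ := by
  obtain ⟨Cf, hCf⟩ := poly_eval_bound f
  obtain ⟨Cg, hCg⟩ := poly_eval_bound g
  have hmeas : AEStronglyMeasurable (fun ζ => (starRingEnd ℂ) (f.eval ζ) * g.eval ζ) μ := by
    exact ((continuous_star.comp f.continuous).mul g.continuous).aestronglyMeasurable
  refine Integrable.mono' (integrable_const (Cf * Cg)) hmeas ?_
  filter_upwards [hcirc] with ζ hζ
  rw [norm_mul, RCLike.norm_conj]
  have h1 := hCf ζ hζ; have h2 := hCg ζ hζ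
  exact mul_le_mul h1 h2 (norm_nonneg _) ((norm_nonneg _).trans h1)

private lemma exists_repr (φ : ℕ → Polynomial ℂ) (hdeg : ∀ k, (φ k).degree = k) :
    ∀ (n : ℕ) (q : Polynomial ℂ), q.degree ≤ (n : WithBot ℕ) →
      ∃ c : ℕ → ℂ, q = ∑ j ∈ Finset.range (n + 1), c j • φ j := by
  have hne : ∀ k, φ k ≠ 0 := by
    intro k h
    have := hdeg k
    rw [h, Polynomial.degree_zero] at this
    exact absurd this (by simp)
  have hlc : ∀ k, (φ k).coeff k ≠ 0 := by
    intro k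
    have h1 : (φ k).natDegree = k := Polynomial.natDegree_eq_of_degree_eq_some (hdeg k)
    have := Polynomial.leadingCoeff_ne_zero.mpr (hne k)
    rwa [Polynomial.leadingCoeff, h1] at this
  intro n
  induction n with
  | zero =>
    intro q hq
    have h0 : φ 0 = Polynomial.C ((φ 0).coeff 0) :=
      Polynomial.eq_C_of_degree_le_zero (le_of_eq (hdeg 0))
    refine ⟨fun _ => q.coeff 0 / (φ 0).coeff 0, ?_⟩
    have hq0 : q = Polynomial.C (q.coeff 0) :=
      Polynomial.eq_C_of_degree_le_zero (by exact_mod_cast hq)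
    rw [Finset.sum_range_one, h0, Polynomial.coeff_C_zero, Polynomial.smul_C, smul_eq_mul,
      div_mul_cancel₀ _ (hlc 0)]
    exact hq0
  | succ m ih =>
    intro q hq
    set d : ℂ := q.coeff (m + 1) / (φ (m + 1)).coeff (m + 1) with hd
    set q' : Polynomial ℂ := q - d • φ (m + 1) with hq'def
    have hdeg' : q'.degree ≤ (m : WithBot ℕ) := by
      rw [Polynomial.degree_le_iff_coeff_zero]
      intro k hk
      have hk1 : m + 1 ≤ k := by exact_mod_cast hk
      rcases eq_or_lt_of_le hk1 with h | h
      · rw [hq'def, Polynomial.coeff_sub, Polynomial.coeff_smul, ← h, smul_eq_mul, hd,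
          div_mul_cancel₀ _ (hlc (m + 1)), sub_self]
      · have hcq : q.coeff k = 0 := Polynomial.coeff_eq_zero_of_degree_lt
          (lt_of_le_of_lt hq (by exact_mod_cast h))
        have hcφ : (φ (m + 1)).coeff k = 0 := Polynomial.coeff_eq_zero_of_degree_lt
          (by rw [hdeg (m + 1)]; exact_mod_cast h)
        rw [hq'def, Polynomial.coeff_sub, Polynomial.coeff_smul, hcq, hcφ, smul_zero, sub_self]
    obtain ⟨c', hc'⟩ := ih q' hdeg'
    refine ⟨fun j => if j = m + 1 then d else c' j, ?_⟩
    rw [Finset.sum_range_succ]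
    beta_reduce
    rw [if_pos rfl]
    have : ∑ j ∈ Finset.range (m + 1), (if j = m + 1 then d else c' j) • φ j
        = ∑ j ∈ Finset.range (m + 1), c' j • φ j := by
      refine Finset.sum_congr rfl fun j hj => ?_
      rw [if_neg (Nat.ne_of_lt (Finset.mem_range.mp hj))]
    rw [this, ← hc', hq'def]
    ring

private lemma reproducing (μ : Measure ℂ) [IsFiniteMeasure μ]
    (hcirc : ∀ᵐ ζ ∂μ, ‖ζ‖ = 1)
    (φ : ℕ → Polynomial ℂ)
    (hdeg : ∀ k, (φ k).degree = k)
    (horth : ∀ m k, ∫ ζ, (starRingEnd ℂ) ((φ m).eval ζ) * (φ k).eval ζ ∂μ =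
      if m = k then 1 else 0)
    (n : ℕ) (w : ℂ) (q : Polynomial ℂ) (hq : q.degree ≤ (n : WithBot ℕ)) :
    ∫ ζ, (starRingEnd ℂ)
        ((∑ j ∈ Finset.range (n + 1),
          Polynomial.C ((starRingEnd ℂ) ((φ j).eval w)) * φ j).eval ζ) * q.eval ζ ∂μ
      = q.eval w := by
  obtain ⟨c, hc⟩ := exists_repr φ hdeg n q hq
  have hsingle : ∀ j ∈ Finset.range (n + 1),
      ∫ ζ, (starRingEnd ℂ) ((φ j).eval ζ) * q.eval ζ ∂μ = c j := by
    intro j hj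
    have hfun : (fun ζ => (starRingEnd ℂ) ((φ j).eval ζ) * q.eval ζ)
        = fun ζ => ∑ k ∈ Finset.range (n + 1),
            c k * ((starRingEnd ℂ) ((φ j).eval ζ) * (φ k).eval ζ) := by
      funext ζ
      conv_lhs => rw [hc]
      rw [Polynomial.eval_finset_sum, Finset.mul_sum]
      refine Finset.sum_congr rfl fun k _ => ?_
      rw [Polynomial.eval_smul, smul_eq_mul]
      ring
    rw [hfun, integral_finset_sum _
      (fun k _ => (integrable_conj_mul μ hcirc (φ j) (φ k)).const_mul (c k))]
    have : ∀ k ∈ Finset.range (n + 1),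
        ∫ ζ, c k * ((starRingEnd ℂ) ((φ j).eval ζ) * (φ k).eval ζ) ∂μ
          = if j = k then c k else 0 := by
      intro k _
      rw [MeasureTheory.integral_const_mul, horth j k]
      split <;> simp
    rw [Finset.sum_congr rfl this, Finset.sum_ite_eq, if_pos hj]
  have hmain : (fun ζ => (starRingEnd ℂ)
        ((∑ j ∈ Finset.range (n + 1),
          Polynomial.C ((starRingEnd ℂ) ((φ j).eval w)) * φ j).eval ζ) * q.eval ζ)
      = fun ζ => ∑ j ∈ Finset.range (n + 1),
          (φ j).eval w * ((starRingEnd ℂ) ((φ j).eval ζ) * q.eval ζ) := by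
    funext ζ
    rw [Polynomial.eval_finset_sum, map_sum, Finset.sum_mul]
    refine Finset.sum_congr rfl fun j _ => ?_
    simp only [Polynomial.eval_mul, Polynomial.eval_C, map_mul, Complex.conj_conj]
    ring
  rw [hmain, integral_finset_sum _
    (fun j _ => (integrable_conj_mul μ hcirc (φ j) q).const_mul _)]
  have hterm : ∀ j ∈ Finset.range (n + 1),
      ∫ ζ, (φ j).eval w * ((starRingEnd ℂ) ((φ j).eval ζ) * q.eval ζ) ∂μ
        = c j * (φ j).eval w := by
    intro j hj
    rw [MeasureTheory.integral_const_mul, hsingle j hj]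
    ring
  rw [Finset.sum_congr rfl hterm]
  conv_rhs => rw [hc]
  rw [Polynomial.eval_finset_sum]
  refine Finset.sum_congr rfl fun j _ => ?_
  rw [Polynomial.eval_smul, smul_eq_mul]

private lemma conj_mul_self (a : ℂ) :
    (starRingEnd ℂ) a * a = ((‖a‖ ^ 2 : ℝ) : ℂ) := by
  rw [mul_comm, Complex.mul_conj, Complex.normSq_eq_norm_sq]

private lemma key_identity (z w : ℂ) :
    Complex.normSq (w - z) - Complex.normSq (1 - (starRingEnd ℂ) z * w)
      = (1 - Complex.normSq z) * (Complex.normSq w - 1) := by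
  simp only [Complex.normSq_apply, Complex.sub_re, Complex.sub_im, Complex.mul_re,
    Complex.mul_im, Complex.one_re, Complex.one_im, Complex.conj_re, Complex.conj_im]
  ring

/-- If `|w| > 1`, every zero of `z ↦ K_n(z,w;μ)` lies in the open unit disk. -/
theorem cd_kernel_zeros_in_disk
    (μ : Measure ℂ) [IsFiniteMeasure μ]
    (hcirc : ∀ᵐ ζ ∂μ, ‖ζ‖ = 1)
    (hnt : Set.Infinite {ζ : ℂ | ∀ ε > 0, μ (Metric.ball ζ ε) ≠ 0})
    (φ : ℕ → Polynomial ℂ) (hφ : IsOPUC μ φ)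
    (n : ℕ) (w : ℂ) (hw : 1 < ‖w‖)
    (z : ℂ) (hz : CDkernel φ n z w = 0) :
    ‖z‖ < 1 := by
  classical
  obtain ⟨hdeg, hlead, horth⟩ := hφ
  set p : Polynomial ℂ :=
    ∑ j ∈ Finset.range (n + 1), Polynomial.C ((starRingEnd ℂ) ((φ j).eval w)) * φ j with hp
  have hrep : ∀ q : Polynomial ℂ, q.degree ≤ (n : WithBot ℕ) →
      ∫ ζ, (starRingEnd ℂ) (p.eval ζ) * q.eval ζ ∂μ = q.eval w := by
    intro q hq
    have := reproducing μ hcirc φ hdeg horth n w q hq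
    rw [← hp] at this
    exact this
  have hpe : ∀ ζ, p.eval ζ = CDkernel φ n ζ w := by
    intro ζ
    simp [hp, CDkernel, Polynomial.eval_finset_sum]
  have hpz : p.eval z = 0 := by rw [hpe]; exact hz
  have hpdeg : p.degree ≤ (n : WithBot ℕ) := by
    rw [hp]
    refine (Polynomial.degree_sum_le _ _).trans (Finset.sup_le fun j hj => ?_)
    refine (Polynomial.degree_mul_le _ _).trans ?_
    have h1 : (Polynomial.C ((starRingEnd ℂ) ((φ j).eval w))).degree ≤ 0 :=
      Polynomial.degree_C_le
    have h2 : (φ j).degree ≤ (n : WithBot ℕ) := by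
      rw [hdeg j]
      exact_mod_cast Nat.lt_succ_iff.mp (Finset.mem_range.mp hj)
    calc (Polynomial.C ((starRingEnd ℂ) ((φ j).eval w))).degree + (φ j).degree
        ≤ 0 + (n : WithBot ℕ) := add_le_add h1 h2
      _ = (n : WithBot ℕ) := zero_add _
  -- Kr is the squared L² norm of p
  set Kr : ℝ := ∫ ζ, ‖p.eval ζ‖ ^ 2 ∂μ with hKrdef
  have hKint : ∫ ζ, (starRingEnd ℂ) (p.eval ζ) * p.eval ζ ∂μ = ((Kr : ℝ) : ℂ) := by
    rw [hKrdef]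
    calc ∫ ζ, (starRingEnd ℂ) (p.eval ζ) * p.eval ζ ∂μ
        = ∫ ζ, ((‖p.eval ζ‖ ^ 2 : ℝ) : ℂ) ∂μ :=
          integral_congr_ae (Filter.Eventually.of_forall fun ζ => conj_mul_self _)
      _ = _ := integral_ofReal
  have hKr : ((Kr : ℝ) : ℂ) = p.eval w := by rw [← hKint, hrep p hpdeg]
  -- positivity of Kr
  have hφ0 : (φ 0).eval w ≠ 0 := by
    have h1 : (φ 0).natDegree = 0 := Polynomial.natDegree_eq_of_degree_eq_some (hdeg 0)
    have h0 : φ 0 = Polynomial.C ((φ 0).coeff 0) :=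
      Polynomial.eq_C_of_degree_le_zero (le_of_eq (hdeg 0))
    have hre : 0 < ((φ 0).coeff 0).re := by
      have := (hlead 0).1
      rwa [Polynomial.leadingCoeff, h1] at this
    intro h
    rw [h0, Polynomial.eval_C] at h
    rw [h] at hre
    simp at hre
  have hKrpos : 0 < Kr := by
    have hsum : ((Kr : ℝ) : ℂ)
        = ((∑ j ∈ Finset.range (n + 1), ‖(φ j).eval w‖ ^ 2 : ℝ) : ℂ) := by
      rw [hKr, hp, Polynomial.eval_finset_sum]
      push_cast
      refine Finset.sum_congr rfl fun j _ => ?_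
      rw [Polynomial.eval_mul, Polynomial.eval_C, conj_mul_self]
      norm_cast
    have hKr' : Kr = ∑ j ∈ Finset.range (n + 1), ‖(φ j).eval w‖ ^ 2 := by
      exact_mod_cast hsum
    rw [hKr']
    have h0 : (0 : ℕ) ∈ Finset.range (n + 1) := by simp
    calc (0 : ℝ) < ‖(φ 0).eval w‖ ^ 2 := pow_pos (norm_pos_iff.mpr hφ0) 2
      _ ≤ ∑ j ∈ Finset.range (n + 1), ‖(φ j).eval w‖ ^ 2 :=
        Finset.single_le_sum (f := fun j => ‖(φ j).eval w‖ ^ 2) (fun i _ => sq_nonneg _) h0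
  have hKne : ((Kr : ℝ) : ℂ) ≠ 0 := by
    exact_mod_cast ne_of_gt hKrpos
  -- factor out the root z
  obtain ⟨r, hr⟩ := Polynomial.dvd_iff_isRoot.mpr hpz
  set R : ℂ := r.eval w with hR
  have hE1 : (w - z) * R = ((Kr : ℝ) : ℂ) := by
    rw [hKr, hr, Polynomial.eval_mul]
    simp [hR]
  have hRne : R ≠ 0 := by
    intro h
    rw [h, mul_zero] at hE1
    exact hKne hE1.symm
  have hrne : r ≠ 0 := by
    intro h
    rw [hR, h] at hRne
    simp at hRne
  -- degree bookkeeping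
  have hrdegnat : 1 + r.natDegree ≤ n := by
    have h1 : p.degree = 1 + r.degree := by
      rw [hr, Polynomial.degree_mul, Polynomial.degree_X_sub_C]
    have h2 : (1 : WithBot ℕ) + (r.natDegree : WithBot ℕ) ≤ (n : WithBot ℕ) := by
      rw [← Polynomial.degree_eq_natDegree hrne, ← h1]
      exact hpdeg
    exact_mod_cast h2
  have hrdeg : r.degree ≤ (n : WithBot ℕ) := by
    rw [Polynomial.degree_eq_natDegree hrne]
    exact_mod_cast le_trans (Nat.le_add_left _ 1) hrdegnat
  set lin : Polynomial ℂ := 1 - Polynomial.C ((starRingEnd ℂ) z) * Polynomial.X with hlin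
  set q1 : Polynomial ℂ := lin * r with hq1
  have hq1deg : q1.degree ≤ (n : WithBot ℕ) := by
    refine (Polynomial.degree_mul_le _ _).trans ?_
    have h1 : lin.degree ≤ 1 := by
      rw [hlin]
      refine (Polynomial.degree_sub_le _ _).trans (max_le ?_ ?_)
      · exact le_trans Polynomial.degree_one_le (by norm_num)
      · exact Polynomial.degree_C_mul_X_le _
    calc lin.degree + r.degree ≤ 1 + (r.natDegree : WithBot ℕ) := by
          rw [Polynomial.degree_eq_natDegree hrne]
          exact add_le_add h1 le_rfl
      _ ≤ (n : WithBot ℕ) := by exact_mod_cast hrdegnat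
  have hq1w : q1.eval w = (1 - (starRingEnd ℂ) z * w) * R := by
    simp [hq1, hlin, hR]
  -- |q1| = |p| a.e.
  have hnormeq : ∀ᵐ ζ ∂μ, ‖q1.eval ζ‖ = ‖p.eval ζ‖ := by
    filter_upwards [hcirc] with ζ hζ
    have hζζ : (starRingEnd ℂ) ζ * ζ = 1 := by
      rw [mul_comm, Complex.mul_conj]
      norm_cast
      rw [Complex.normSq_eq_norm_sq, hζ]
      norm_num
    have h1 : ‖(1 : ℂ) - (starRingEnd ℂ) z * ζ‖ = ‖ζ - z‖ := by
      calc ‖(1 : ℂ) - (starRingEnd ℂ) z * ζ‖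
          = ‖(starRingEnd ℂ) ((1 : ℂ) - (starRingEnd ℂ) z * ζ)‖ := (RCLike.norm_conj _).symm
        _ = ‖(starRingEnd ℂ) ζ * (ζ - z)‖ := by
            congr 1
            simp only [map_sub, map_one, map_mul, Complex.conj_conj]
            linear_combination -hζζ
        _ = ‖ζ - z‖ := by
            rw [norm_mul, RCLike.norm_conj, hζ, one_mul]
    have hlineval : lin.eval ζ = 1 - (starRingEnd ℂ) z * ζ := by
      simp [hlin]
    have hXz : (Polynomial.X - Polynomial.C z).eval ζ = ζ - z := by simp
    rw [hq1, hr, Polynomial.eval_mul, Polynomial.eval_mul, norm_mul, norm_mul,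
      hlineval, hXz, h1]
  -- the key inequality
  have hchain : ‖q1.eval w‖ ≤ Kr := by
    calc ‖q1.eval w‖ = ‖∫ ζ, (starRingEnd ℂ) (p.eval ζ) * q1.eval ζ ∂μ‖ := by
          rw [hrep q1 hq1deg]
      _ ≤ ∫ ζ, ‖(starRingEnd ℂ) (p.eval ζ) * q1.eval ζ‖ ∂μ :=
          norm_integral_le_integral_norm _
      _ = ∫ ζ, ‖p.eval ζ‖ ^ 2 ∂μ := by
          refine integral_congr_ae ?_
          filter_upwards [hnormeq] with ζ h
          rw [norm_mul, RCLike.norm_conj, h]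
          ring
      _ = Kr := rfl
  have hKrnorm : ‖((Kr : ℝ) : ℂ)‖ = Kr := by
    rw [Complex.norm_real, Real.norm_eq_abs, abs_of_pos hKrpos]
  have hle2 : ‖(1 : ℂ) - (starRingEnd ℂ) z * w‖ ≤ ‖w - z‖ := by
    have h1 : ‖(1 : ℂ) - (starRingEnd ℂ) z * w‖ * ‖R‖ ≤ ‖w - z‖ * ‖R‖ := by
      calc ‖(1 : ℂ) - (starRingEnd ℂ) z * w‖ * ‖R‖ = ‖q1.eval w‖ := by
            rw [hq1w, norm_mul]
        _ ≤ Kr := hchain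
        _ = ‖((Kr : ℝ) : ℂ)‖ := hKrnorm.symm
        _ = ‖w - z‖ * ‖R‖ := by rw [← hE1, norm_mul]
    exact le_of_mul_le_mul_right h1 (norm_pos_iff.mpr hRne)
  have hsq : Complex.normSq (1 - (starRingEnd ℂ) z * w) ≤ Complex.normSq (w - z) := by
    rw [Complex.normSq_eq_norm_sq, Complex.normSq_eq_norm_sq]
    exact pow_le_pow_left₀ (norm_nonneg _) hle2 2
  have hwsq : 1 < Complex.normSq w := by
    rw [Complex.normSq_eq_norm_sq]
    nlinarith [norm_nonneg w]
  have hzle : Complex.normSq z ≤ 1 := by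
    have := key_identity z w
    nlinarith [hsq, hwsq]
  -- exclude the boundary case
  have hzne : Complex.normSq z ≠ 1 := by
    intro hbd
    have hzz : (starRingEnd ℂ) z * z = 1 := by
      rw [mul_comm, Complex.mul_conj, hbd]
      norm_num
    -- q1 = (-conj z) • p
    have hCz : Polynomial.C ((starRingEnd ℂ) z) * Polynomial.C z = 1 := by
      rw [← Polynomial.C_mul, hzz, Polynomial.C_1]
    have hq1p : q1 = Polynomial.C (-(starRingEnd ℂ) z) * p := by
      rw [hq1, hr, hlin, ← mul_assoc]
      congr 1
      rw [map_neg]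
      linear_combination (-1 : Polynomial ℂ) * hCz
    -- A = ∫ conj r * q1
    have hA1 : ∫ ζ, (starRingEnd ℂ) (r.eval ζ) * q1.eval ζ ∂μ
        = -(starRingEnd ℂ) z * (starRingEnd ℂ) R := by
      have hfun : (fun ζ => (starRingEnd ℂ) (r.eval ζ) * q1.eval ζ)
          = fun ζ => (-(starRingEnd ℂ) z) *
              ((starRingEnd ℂ) (r.eval ζ) * p.eval ζ) := by
        funext ζ
        rw [hq1p, Polynomial.eval_mul, Polynomial.eval_C]
        ring
      rw [hfun, MeasureTheory.integral_const_mul]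
      congr 1
      have hfun2 : (fun ζ => (starRingEnd ℂ) (r.eval ζ) * p.eval ζ)
          = fun ζ => (starRingEnd ℂ) ((starRingEnd ℂ) (p.eval ζ) * r.eval ζ) := by
        funext ζ
        rw [map_mul, Complex.conj_conj]
        ring
      rw [hfun2, integral_conj, hrep r hrdeg]
    -- Kr = A + conj A
    have hKA : ((Kr : ℝ) : ℂ)
        = (∫ ζ, (starRingEnd ℂ) (r.eval ζ) * q1.eval ζ ∂μ)
          + (starRingEnd ℂ) (∫ ζ, (starRingEnd ℂ) (r.eval ζ) * q1.eval ζ ∂μ) := by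
      rw [← hKint, ← integral_conj]
      rw [← integral_add (integrable_conj_mul μ hcirc r q1)]
      · refine integral_congr_ae ?_
        filter_upwards [hcirc] with ζ hζ
        have hζζ : (starRingEnd ℂ) ζ * ζ = 1 := by
          rw [mul_comm, Complex.mul_conj]
          norm_cast
          rw [Complex.normSq_eq_norm_sq, hζ]
          norm_num
        rw [hq1, hr]
        simp only [Polynomial.eval_mul, hlin, Polynomial.eval_sub, Polynomial.eval_one,
          Polynomial.eval_C, Polynomial.eval_X, map_mul, map_sub, map_one, Complex.conj_conj]
        set rc := r.eval ζ
        linear_combination ((starRingEnd ℂ) rc * rc) * hζζ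
          + ((starRingEnd ℂ) rc * rc) * hzz
      · -- integrability of the conjugate
        have hfun3 : (fun ζ => (starRingEnd ℂ) ((starRingEnd ℂ) (r.eval ζ) * q1.eval ζ))
            = fun ζ => (starRingEnd ℂ) (q1.eval ζ) * r.eval ζ := by
          funext ζ
          rw [map_mul, Complex.conj_conj]
          ring
        rw [hfun3]
        exact integrable_conj_mul μ hcirc q1 r
    have hKA' : ((Kr : ℝ) : ℂ) = -(starRingEnd ℂ) z * (starRingEnd ℂ) R - z * R := by
      rw [hKA, hA1]
      simp only [map_mul, map_neg, Complex.conj_conj]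
      ring
    have hE1c : ((starRingEnd ℂ) w - (starRingEnd ℂ) z) * (starRingEnd ℂ) R
        = ((Kr : ℝ) : ℂ) := by
      have := congrArg (starRingEnd ℂ) hE1
      rwa [map_mul, map_sub, Complex.conj_ofReal] at this
    have hM : ((Kr : ℝ) : ℂ) * (w * (starRingEnd ℂ) w) = ((Kr : ℝ) : ℂ) * 1 := by
      linear_combination ((w - z) * ((starRingEnd ℂ) w - (starRingEnd ℂ) z)) * hKA'
        - (starRingEnd ℂ) z * (w - z) * hE1c
        - z * ((starRingEnd ℂ) w - (starRingEnd ℂ) z) * hE1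
        + ((Kr : ℝ) : ℂ) * hzz
    have hww : w * (starRingEnd ℂ) w = 1 := mul_left_cancel₀ hKne hM
    rw [Complex.mul_conj] at hww
    have : Complex.normSq w = 1 := by exact_mod_cast hww
    rw [this] at hwsq
    exact lt_irrefl _ hwsq
  -- conclude
  have hzlt : Complex.normSq z < 1 := lt_of_le_of_ne hzle hzne
  rw [Complex.normSq_eq_norm_sq] at hzlt
  nlinarith [norm_nonneg z]
end

section
/- Let μ be a nontrivial positive measure on the unit circle with CD kernels K_n. If |w| < 1, then every zero z of the polynomial z ↦ K_n(z,w;μ) satisfies |z| > 1. -/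
open MeasureTheory Complex Polynomial

section
variable (μ : Measure ℂ)

noncomputable def pip (μ : Measure ℂ) (f g : Polynomial ℂ) : ℂ :=
  ∫ ζ, (starRingEnd ℂ) (f.eval ζ) * g.eval ζ ∂μ

lemma pip_conj (f g : Polynomial ℂ) : pip μ f g = (starRingEnd ℂ) (pip μ g f) := by
  rw [pip, pip, ← integral_conj]
  exact integral_congr_ae (Filter.Eventually.of_forall fun ζ => by
    simp [mul_comm])

lemma pip_self (f : Polynomial ℂ) :
    pip μ f f = ((∫ ζ, Complex.normSq (f.eval ζ) ∂μ : ℝ) : ℂ) := by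
  calc pip μ f f = ∫ ζ, ((Complex.normSq (f.eval ζ) : ℝ) : ℂ) ∂μ :=
      integral_congr_ae (Filter.Eventually.of_forall fun ζ =>
        Complex.normSq_eq_conj_mul_self.symm)
    _ = _ := integral_ofReal

lemma pip_self_nonneg (f : Polynomial ℂ) :
    ∃ r : ℝ, 0 ≤ r ∧ pip μ f f = (r : ℂ) :=
  ⟨_, integral_nonneg fun ζ => Complex.normSq_nonneg _, pip_self μ f⟩

lemma pip_smul_right (f g : Polynomial ℂ) (c : ℂ) :
    pip μ f (c • g) = c * pip μ f g := by
  calc pip μ f (c • g) = ∫ ζ, c • ((starRingEnd ℂ) (f.eval ζ) * g.eval ζ) ∂μ :=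
      integral_congr_ae (Filter.Eventually.of_forall fun ζ => by simp [smul_eq_mul]; ring)
    _ = c * pip μ f g := by rw [integral_smul, smul_eq_mul, pip]

lemma pip_smul_left (f g : Polynomial ℂ) (c : ℂ) :
    pip μ (c • f) g = (starRingEnd ℂ) c * pip μ f g := by
  calc pip μ (c • f) g
      = ∫ ζ, (starRingEnd ℂ) c • ((starRingEnd ℂ) (f.eval ζ) * g.eval ζ) ∂μ :=
      integral_congr_ae (Filter.Eventually.of_forall fun ζ => by simp [smul_eq_mul]; ring)
    _ = _ := by rw [integral_smul, smul_eq_mul, pip]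

end

lemma poly_bound (f : Polynomial ℂ) : ∃ C : ℝ, 0 ≤ C ∧ ∀ ζ : ℂ, ‖ζ‖ = 1 → ‖f.eval ζ‖ ≤ C := by
  refine ⟨∑ i ∈ Finset.range (f.natDegree + 1), ‖f.coeff i‖,
    Finset.sum_nonneg fun _ _ => norm_nonneg _, fun ζ hζ => ?_⟩
  rw [Polynomial.eval_eq_sum_range]
  refine (norm_sum_le _ _).trans (Finset.sum_le_sum fun i _ => ?_)
  rw [norm_mul, norm_pow, hζ, one_pow, mul_one]

section
variable (μ : Measure ℂ) [IsFiniteMeasure μ] (hcirc : ∀ᵐ ζ ∂μ, ‖ζ‖ = 1)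
include hcirc

lemma pip_integrable (f g : Polynomial ℂ) :
    Integrable (fun ζ => (starRingEnd ℂ) (f.eval ζ) * g.eval ζ) μ := by
  obtain ⟨Cf, hCf0, hCf⟩ := poly_bound f
  obtain ⟨Cg, hCg0, hCg⟩ := poly_bound g
  refine ⟨Continuous.aestronglyMeasurable
    ((Complex.continuous_conj.comp (f.continuous_aeval)).mul g.continuous_aeval),
    HasFiniteIntegral.of_bounded (C := Cf * Cg) ?_⟩
  filter_upwards [hcirc] with ζ hζ
  rw [norm_mul, RCLike.norm_conj]
  exact mul_le_mul (hCf ζ hζ) (hCg ζ hζ) (norm_nonneg _) hCf0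

lemma pip_add_right (f g h : Polynomial ℂ) :
    pip μ f (g + h) = pip μ f g + pip μ f h := by
  rw [pip, pip, pip, ← integral_add (pip_integrable μ hcirc f g) (pip_integrable μ hcirc f h)]
  exact integral_congr_ae (Filter.Eventually.of_forall fun ζ => by simp; ring)

lemma pip_sub_right (f g h : Polynomial ℂ) :
    pip μ f (g - h) = pip μ f g - pip μ f h := by
  rw [pip, pip, pip, ← integral_sub (pip_integrable μ hcirc f g) (pip_integrable μ hcirc f h)]
  exact integral_congr_ae (Filter.Eventually.of_forall fun ζ => by simp; ring)

lemma pip_sub_left (f g h : Polynomial ℂ) :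
    pip μ (f - g) h = pip μ f h - pip μ g h := by
  rw [pip_conj μ (f - g), pip_sub_right μ hcirc, map_sub, ← pip_conj, ← pip_conj]

end

lemma span_poly (φ : ℕ → Polynomial ℂ) (hdeg : ∀ j, (φ j).degree = j) :
    ∀ (m : ℕ) (f : Polynomial ℂ), f.degree ≤ (m : WithBot ℕ) →
      f ∈ Submodule.span ℂ (φ '' Set.Iic m) := by
  have hne : ∀ j, φ j ≠ 0 := fun j h => by
    have := hdeg j; rw [h, Polynomial.degree_zero] at this; exact absurd this (by simp)
  have hnd : ∀ j, (φ j).natDegree = j := fun j =>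
    Polynomial.natDegree_eq_of_degree_eq_some (hdeg j)
  have hc : ∀ j, (φ j).coeff j ≠ 0 := fun j => by
    have := Polynomial.leadingCoeff_ne_zero.mpr (hne j)
    rwa [Polynomial.leadingCoeff, hnd j] at this
  intro m
  induction m with
  | zero =>
    intro f hf
    have hf0 : f = Polynomial.C (f.coeff 0) := Polynomial.eq_C_of_degree_le_zero (by
      simpa using hf)
    have hφ0 : φ 0 = Polynomial.C ((φ 0).coeff 0) := Polynomial.eq_C_of_degree_le_zero (by
      simp [hdeg 0])
    have key : ∀ a b : ℂ, b ≠ 0 → Polynomial.C a = (a / b) • Polynomial.C b := by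
      intro a b hb; rw [Polynomial.smul_C, smul_eq_mul, div_mul_cancel₀ _ hb]
    have : f = (f.coeff 0 / (φ 0).coeff 0) • φ 0 := by
      calc f = Polynomial.C (f.coeff 0) := hf0
        _ = (f.coeff 0 / (φ 0).coeff 0) • Polynomial.C ((φ 0).coeff 0) := key _ _ (hc 0)
        _ = _ := by rw [← hφ0]
    rw [this]
    exact Submodule.smul_mem _ _ (Submodule.subset_span ⟨0, Set.mem_Iic.mpr (le_refl 0), rfl⟩)
  | succ m ih =>
    intro f hf
    set c : ℂ := f.coeff (m + 1) / (φ (m + 1)).coeff (m + 1) with hcdef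
    set g : Polynomial ℂ := f - c • φ (m + 1) with hgdef
    have hgd : g.degree ≤ m := by
      rw [Polynomial.degree_le_iff_coeff_zero]
      intro k hk
      have hk' : m < k := by exact_mod_cast hk
      rcases eq_or_lt_of_le (Nat.succ_le_of_lt hk') with hk2 | hk2
      · have : g.coeff (m + 1) = 0 := by
          simp only [hgdef, Polynomial.coeff_sub, Polynomial.coeff_smul, smul_eq_mul, hcdef]
          rw [div_mul_cancel₀ _ (hc (m + 1)), sub_self]
        rwa [← hk2]
      · have h1 : f.coeff k = 0 := Polynomial.coeff_eq_zero_of_degree_lt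
          (lt_of_le_of_lt hf (by exact_mod_cast hk2))
        have h2 : (φ (m + 1)).coeff k = 0 := Polynomial.coeff_eq_zero_of_degree_lt
          (lt_of_le_of_lt (le_of_eq (hdeg (m + 1))) (by exact_mod_cast hk2))
        simp [hgdef, h1, h2]
    have hg : g ∈ Submodule.span ℂ (φ '' Set.Iic (m + 1)) := by
      refine Submodule.span_mono (Set.image_mono ?_) (ih g hgd)
      exact Set.Iic_subset_Iic.mpr (Nat.le_succ m)
    have : f = g + c • φ (m + 1) := by rw [hgdef]; ring
    rw [this]
    exact Submodule.add_mem _ hg (Submodule.smul_mem _ _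
      (Submodule.subset_span ⟨m + 1, Set.mem_Iic.mpr (le_refl _), rfl⟩))

noncomputable def Pker (φ : ℕ → Polynomial ℂ) (n : ℕ) (w : ℂ) : Polynomial ℂ :=
  ∑ j ∈ Finset.range (n + 1), Polynomial.C ((starRingEnd ℂ) ((φ j).eval w)) * φ j

lemma Pker_eval (φ : ℕ → Polynomial ℂ) (n : ℕ) (w ζ : ℂ) :
    (Pker φ n w).eval ζ = CDkernel φ n ζ w := by
  simp [Pker, CDkernel, Polynomial.eval_finset_sum]

lemma Pker_degree (φ : ℕ → Polynomial ℂ) (hdeg : ∀ j, (φ j).degree = j) (n : ℕ) (w : ℂ) :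
    (Pker φ n w).degree ≤ (n : WithBot ℕ) := by
  refine (Polynomial.degree_sum_le _ _).trans ?_
  rw [Finset.sup_le_iff]
  intro j hj
  refine le_trans (Polynomial.degree_mul_le _ _) ?_
  rw [hdeg j]
  refine le_trans (add_le_add_left Polynomial.degree_C_le _) ?_
  rw [zero_add]
  exact_mod_cast Nat.lt_succ_iff.mp (Finset.mem_range.mp hj)

lemma pip_Pker_basis (μ : Measure ℂ) [IsFiniteMeasure μ] (hcirc : ∀ᵐ ζ ∂μ, ‖ζ‖ = 1)
    (φ : ℕ → Polynomial ℂ)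
    (horth : ∀ m k, pip μ (φ m) (φ k) = if m = k then 1 else 0)
    (n : ℕ) (w : ℂ) (k : ℕ) (hk : k < n + 1) :
    pip μ (Pker φ n w) (φ k) = (φ k).eval w := by
  have h1 : pip μ (Pker φ n w) (φ k)
      = ∫ ζ, ∑ j ∈ Finset.range (n + 1),
          (φ j).eval w * ((starRingEnd ℂ) ((φ j).eval ζ) * (φ k).eval ζ) ∂μ := by
    refine integral_congr_ae (Filter.Eventually.of_forall fun ζ => ?_)
    simp only [Pker, Polynomial.eval_finset_sum, Polynomial.eval_mul, Polynomial.eval_C,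
      map_sum, map_mul, Complex.conj_conj, Finset.sum_mul]
    exact Finset.sum_congr rfl fun j _ => mul_assoc _ _ _
  rw [h1, integral_finset_sum _ (fun j _ => ((pip_integrable μ hcirc (φ j) (φ k)).const_mul _))]
  have h2 : ∀ j ∈ Finset.range (n + 1),
      (∫ ζ, (φ j).eval w * ((starRingEnd ℂ) ((φ j).eval ζ) * (φ k).eval ζ) ∂μ)
        = (φ j).eval w * pip μ (φ j) (φ k) := fun j _ => integral_const_mul _ _
  rw [Finset.sum_congr rfl h2]
  simp [horth, Finset.sum_ite_eq', Finset.mem_range.mpr hk]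

lemma pip_Pker_reproducing (μ : Measure ℂ) [IsFiniteMeasure μ] (hcirc : ∀ᵐ ζ ∂μ, ‖ζ‖ = 1)
    (φ : ℕ → Polynomial ℂ) (hdeg : ∀ j, (φ j).degree = j)
    (horth : ∀ m k, pip μ (φ m) (φ k) = if m = k then 1 else 0)
    (n : ℕ) (w : ℂ) (f : Polynomial ℂ) (hf : f.degree ≤ (n : WithBot ℕ)) :
    pip μ (Pker φ n w) f = f.eval w := by
  have hmem := span_poly φ hdeg n f hf
  clear hf
  induction hmem using Submodule.span_induction with
  | mem x hx =>
    obtain ⟨k, hk, rfl⟩ := hx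
    exact pip_Pker_basis μ hcirc φ horth n w k (Nat.lt_succ_of_le (Set.mem_Iic.mp hk))
  | zero => simp [pip]
  | add x y hx hy ihx ihy =>
    rw [pip_add_right μ hcirc, ihx, ihy, Polynomial.eval_add]
  | smul a x hx ih =>
    rw [pip_smul_right, ih, Polynomial.eval_smul, smul_eq_mul]

set_option maxHeartbeats 1000000 in
/-- If `|w| < 1`, every zero of `z ↦ K_n(z,w;μ)` lies outside the closed unit disk. -/
theorem cd_kernel_zeros_outside_disk
    (μ : Measure ℂ) [IsFiniteMeasure μ]
    (hcirc : ∀ᵐ ζ ∂μ, ‖ζ‖ = 1)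
    (hnt : Set.Infinite {ζ : ℂ | ∀ ε > 0, μ (Metric.ball ζ ε) ≠ 0})
    (φ : ℕ → Polynomial ℂ) (hφ : IsOPUC μ φ)
    (n : ℕ) (w : ℂ) (hw : ‖w‖ < 1)
    (z : ℂ) (hz : CDkernel φ n z w = 0) :
    1 < ‖z‖ := by
  obtain ⟨hdeg, hlc, horth⟩ := hφ
  by_contra hz1
  push_neg at hz1
  set P : Polynomial ℂ := Pker φ n w with hPdef
  have hPdeg : P.degree ≤ (n : WithBot ℕ) := Pker_degree φ hdeg n w
  -- the kernel diagonal value is a positive real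
  have hφ0 : (φ 0).eval w ≠ 0 := by
    have h0 : φ 0 = Polynomial.C ((φ 0).coeff 0) :=
      Polynomial.eq_C_of_degree_le_zero (by simp [hdeg 0])
    have hl : (φ 0).leadingCoeff ≠ 0 := fun h => by simpa [h] using (hlc 0).1
    rw [Polynomial.leadingCoeff, Polynomial.natDegree_eq_of_degree_eq_some (hdeg 0)] at hl
    rw [h0, Polynomial.eval_C]
    exact hl
  set Kr : ℝ := ∑ j ∈ Finset.range (n + 1), Complex.normSq ((φ j).eval w) with hKrdef
  have hKpos : 0 < Kr := Finset.sum_pos'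
    (fun j _ => Complex.normSq_nonneg _)
    ⟨0, Finset.mem_range.mpr (Nat.succ_pos n), Complex.normSq_pos.mpr hφ0⟩
  have hPwK : P.eval w = (Kr : ℂ) := by
    rw [hPdef, Pker_eval, CDkernel, hKrdef]
    push_cast
    exact Finset.sum_congr rfl fun j _ => Complex.normSq_eq_conj_mul_self.symm
  have hPz : P.eval z = 0 := by rw [hPdef, Pker_eval]; exact hz
  -- factor out the root z
  obtain ⟨s, hs⟩ := Polynomial.dvd_iff_isRoot.mpr hPz
  have hKws : (w - z) * s.eval w = (Kr : ℂ) := by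
    rw [← hPwK, hs]; simp
  set σ : ℂ := s.eval w with hσdef
  have hσ : σ ≠ 0 := by
    intro h
    rw [h, mul_zero] at hKws
    exact hKpos.ne' (by exact_mod_cast hKws.symm)
  -- degree facts
  have hds : (Polynomial.X * s).degree ≤ (n : WithBot ℕ) := by
    rw [Polynomial.degree_mul, Polynomial.degree_X, ← Polynomial.degree_X_sub_C z,
      ← Polynomial.degree_mul, ← hs]
    exact hPdeg
  have hdss : s.degree ≤ (n : WithBot ℕ) := by
    refine le_trans ?_ hds
    rw [mul_comm]
    exact Polynomial.degree_le_mul_left s Polynomial.X_ne_zero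
  -- decomposition of P
  have hPdecomp : P = Polynomial.X * s - z • s := by
    rw [hs, Polynomial.smul_eq_C_mul]; ring
  -- the basic integrals
  set Ar : ℝ := ∫ ζ, Complex.normSq (s.eval ζ) ∂μ with hArdef
  have hA : pip μ s s = (Ar : ℂ) := pip_self μ s
  set Bc : ℂ := pip μ s (Polynomial.X * s) with hBdef
  have hXsXs : pip μ (Polynomial.X * s) (Polynomial.X * s) = (Ar : ℂ) := by
    rw [← hA, pip, pip]
    refine integral_congr_ae ?_
    filter_upwards [hcirc] with ζ hζ
    have h1 : (starRingEnd ℂ) ζ * ζ = 1 := by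
      rw [← Complex.normSq_eq_conj_mul_self, Complex.normSq_eq_norm_sq, hζ]
      norm_num
    simp only [Polynomial.eval_mul, Polynomial.eval_X, map_mul]
    linear_combination ((starRingEnd ℂ) (s.eval ζ) * s.eval ζ) * h1
  -- reproducing identities
  have Rs : pip μ P s = σ :=
    pip_Pker_reproducing μ hcirc φ hdeg horth n w s hdss
  have RXs : pip μ P (Polynomial.X * s) = w * σ := by
    rw [pip_Pker_reproducing μ hcirc φ hdeg horth n w _ hds]
    simp [hσdef]
  have e1 : σ = (starRingEnd ℂ) Bc - (starRingEnd ℂ) z * (Ar : ℂ) := by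
    rw [← Rs, hPdecomp, pip_sub_left μ hcirc, pip_smul_left, hA, hBdef,
      pip_conj μ (Polynomial.X * s) s, ← pip_conj]
  have e2 : w * σ = (Ar : ℂ) - (starRingEnd ℂ) z * Bc := by
    rw [← RXs, hPdecomp, pip_sub_left μ hcirc, pip_smul_left, hXsXs, hBdef]
  have e2c : (starRingEnd ℂ) w * (starRingEnd ℂ) σ = (Ar : ℂ) - z * (starRingEnd ℂ) Bc := by
    have := congrArg (starRingEnd ℂ) e2
    simpa [map_sub, map_mul, Complex.conj_ofReal] using this
  rcases lt_or_eq_of_le hz1 with hzlt | hzeq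
  · -- case ‖z‖ < 1 : Cauchy–Schwarz argument
    set f : Polynomial ℂ := (1 - Polynomial.C ((starRingEnd ℂ) z) * Polynomial.X) * s with hfdef
    have hlin : (1 - Polynomial.C ((starRingEnd ℂ) z) * Polynomial.X).degree ≤ 1 := by
      refine le_trans (Polynomial.degree_sub_le _ _) ?_
      rw [max_le_iff]
      constructor
      · exact le_trans Polynomial.degree_one_le (by norm_num)
      · refine le_trans (Polynomial.degree_mul_le _ _) ?_
        rw [Polynomial.degree_X]
        exact le_trans (add_le_add_left Polynomial.degree_C_le _) (by rw [zero_add])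
    have hdf : f.degree ≤ (n : WithBot ℕ) := by
      refine le_trans (Polynomial.degree_mul_le _ _) ?_
      refine le_trans (add_le_add_left hlin _) ?_
      rw [← Polynomial.degree_X_sub_C z, ← Polynomial.degree_mul, ← hs]
      exact hPdeg
    have Rf : pip μ P f = (1 - (starRingEnd ℂ) z * w) * σ := by
      rw [pip_Pker_reproducing μ hcirc φ hdeg horth n w _ hdf]
      simp [hfdef, hσdef]
    have RP : pip μ P P = (Kr : ℂ) := by
      rw [pip_Pker_reproducing μ hcirc φ hdeg horth n w _ hPdeg, hPwK]
    have hff : pip μ f f = (Kr : ℂ) := by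
      rw [← RP, pip, pip]
      refine integral_congr_ae ?_
      filter_upwards [hcirc] with ζ hζ
      have h1 : (starRingEnd ℂ) ζ * ζ = 1 := by
        rw [← Complex.normSq_eq_conj_mul_self, Complex.normSq_eq_norm_sq, hζ]
        norm_num
      rw [hs]
      simp only [hfdef, Polynomial.eval_mul, Polynomial.eval_sub, Polynomial.eval_one,
        Polynomial.eval_X, Polynomial.eval_C, map_mul, map_sub, map_one, Complex.conj_conj]
      linear_combination ((z * (starRingEnd ℂ) z - 1) *
        ((starRingEnd ℂ) (s.eval ζ) * s.eval ζ)) * h1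
    set t : ℂ := pip μ P f with htdef
    -- Cauchy-Schwarz via the nonnegative element
    obtain ⟨r, hr0, hrg⟩ := pip_self_nonneg μ ((Kr : ℂ) • f - t • P)
    have hexp : pip μ ((Kr : ℂ) • f - t • P) ((Kr : ℂ) • f - t • P)
        = (Kr : ℂ) * ((Kr : ℂ) * (Kr : ℂ) - t * (starRingEnd ℂ) t) := by
      rw [pip_sub_left μ hcirc, pip_sub_right μ hcirc, pip_sub_right μ hcirc]
      simp only [pip_smul_left, pip_smul_right]
      have hfP : pip μ f P = (starRingEnd ℂ) t := by rw [htdef, ← pip_conj]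
      rw [hff, RP, hfP, Complex.conj_ofReal]
      ring
    have hts : t * (starRingEnd ℂ) t = ((Complex.normSq t : ℝ) : ℂ) := by
      rw [Complex.normSq_eq_conj_mul_self]; ring
    have hreal : r = Kr * (Kr * Kr - Complex.normSq t) := by
      have : ((r : ℝ) : ℂ) = ((Kr * (Kr * Kr - Complex.normSq t) : ℝ) : ℂ) := by
        rw [← hrg, hexp, hts]; push_cast; ring
      exact_mod_cast this
    have hCS : Complex.normSq t ≤ Kr * Kr := by
      nlinarith [hKpos, hr0, hreal]
    -- translate to norms
    have htnorm : ‖t‖ ≤ Kr := by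
      have h1 : ‖t‖ ^ 2 ≤ Kr ^ 2 := by
        have hnt2 : Complex.normSq t = ‖t‖ ^ 2 := by
          rw [Complex.normSq_eq_norm_sq]
        nlinarith [hCS, hnt2]
      nlinarith [norm_nonneg t, hKpos, h1]
    have htval : ‖t‖ = ‖1 - (starRingEnd ℂ) z * w‖ * ‖σ‖ := by
      rw [Rf, norm_mul]
    have hKval : Kr = ‖w - z‖ * ‖σ‖ := by
      have : ‖(w - z) * σ‖ = ‖((Kr : ℝ) : ℂ)‖ := by rw [hKws]
      rw [norm_mul, Complex.norm_real, Real.norm_eq_abs, abs_of_pos hKpos] at this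
      linarith [this]
    have hineq : ‖1 - (starRingEnd ℂ) z * w‖ ≤ ‖w - z‖ := by
      have hσpos : 0 < ‖σ‖ := norm_pos_iff.mpr hσ
      have := htnorm
      rw [htval, hKval] at this
      exact le_of_mul_le_mul_right this hσpos
    -- but the reverse strict inequality holds
    have hiden : Complex.normSq (1 - (starRingEnd ℂ) z * w) - Complex.normSq (w - z)
        = (1 - Complex.normSq z) * (1 - Complex.normSq w) := by
      have : ((Complex.normSq (1 - (starRingEnd ℂ) z * w) : ℝ) : ℂ)
          - ((Complex.normSq (w - z) : ℝ) : ℂ)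
          = (1 - ((Complex.normSq z : ℝ) : ℂ)) * (1 - ((Complex.normSq w : ℝ) : ℂ)) := by
        rw [Complex.normSq_eq_conj_mul_self, Complex.normSq_eq_conj_mul_self,
          Complex.normSq_eq_conj_mul_self, Complex.normSq_eq_conj_mul_self]
        simp only [map_sub, map_mul, map_one, Complex.conj_conj]
        ring
      exact_mod_cast this
    have hz2 : Complex.normSq z < 1 := by
      rw [Complex.normSq_eq_norm_sq]
      nlinarith [norm_nonneg z, hzlt]
    have hw2 : Complex.normSq w < 1 := by
      rw [Complex.normSq_eq_norm_sq]
      nlinarith [norm_nonneg w, hw]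
    have hstrict : Complex.normSq (w - z) < Complex.normSq (1 - (starRingEnd ℂ) z * w) := by
      nlinarith [hiden, hz2, hw2]
    have hfin : ‖w - z‖ < ‖1 - (starRingEnd ℂ) z * w‖ := by
      have h1 : ‖w - z‖ ^ 2 < ‖1 - (starRingEnd ℂ) z * w‖ ^ 2 := by
        simpa [Complex.sq_norm] using hstrict
      exact lt_of_pow_lt_pow_left₀ 2 (norm_nonneg _) h1
    linarith
  · -- case ‖z‖ = 1 : identity argument
    have hzz : (starRingEnd ℂ) z * z = 1 := by
      rw [← Complex.normSq_eq_conj_mul_self, Complex.normSq_eq_norm_sq,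
        hzeq]
      norm_num
    have key : (starRingEnd ℂ) w * (starRingEnd ℂ) σ = -(z * σ) := by
      linear_combination e2c + z * e1 - ((Ar : ℝ) : ℂ) * hzz
    have hn : ‖w‖ * ‖σ‖ = ‖z‖ * ‖σ‖ := by
      have := congrArg norm key
      rwa [norm_mul, norm_neg, norm_mul, RCLike.norm_conj, RCLike.norm_conj] at this
    have hσpos : 0 < ‖σ‖ := norm_pos_iff.mpr hσ
    have hwz : ‖w‖ = ‖z‖ := mul_right_cancel₀ hσpos.ne' hn
    rw [hzeq] at hwz
    linarith
end

section
/- Let μ be a nontrivial positive measure on the unit circle, w ∈ ℂ fixed, and dμ_w(ζ) = (1 − w̄ζ)dμ(ζ). Then for every n ≥ 1 and every 1 ≤ s ≤ n, ∫_T ζ̄^s K_n(ζ,w;μ) dμ_w(ζ) = 0. -/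
open MeasureTheory Complex Polynomial

private lemma integrable_of_cont (μ : Measure ℂ) [IsFiniteMeasure μ]
    (hcirc : ∀ᵐ ζ ∂μ, ‖ζ‖ = 1) {f : ℂ → ℂ} (hf : Continuous f) :
    Integrable f μ := by
  obtain ⟨z0, hz0, hz0max⟩ := (isCompact_sphere (0:ℂ) 1).exists_isMaxOn
    (NormedSpace.sphere_nonempty.2 zero_le_one) hf.norm.continuousOn
  refine (integrable_const ‖f z0‖).mono' hf.aestronglyMeasurable ?_
  filter_upwards [hcirc] with ζ hζ
  exact hz0max (mem_sphere_zero_iff_norm.2 hζ)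

private lemma mem_span_of_deg (φ : ℕ → Polynomial ℂ) (hdeg : ∀ n, (φ n).degree = n) :
    ∀ d, ∀ p : Polynomial ℂ, p.degree < (d : ℕ) →
      p ∈ Submodule.span ℂ (φ '' Set.Iio d) := by
  intro d
  induction d with
  | zero =>
    intro p hp
    have : p = 0 := by
      rwa [Nat.cast_zero, Nat.WithBot.lt_zero_iff, degree_eq_bot] at hp
    simp [this]
  | succ d ih =>
    intro p hp
    have hmono : Submodule.span ℂ (φ '' Set.Iio d) ≤
        Submodule.span ℂ (φ '' Set.Iio (d+1)) :=
      Submodule.span_mono (Set.image_mono (Set.Iio_subset_Iio (Nat.le_succ d)))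
    have hφd : (φ d).natDegree = d := natDegree_eq_of_degree_eq_some (hdeg d)
    have hl : (φ d).leadingCoeff ≠ 0 := by
      rw [Ne, leadingCoeff_eq_zero, ← degree_eq_bot, hdeg d]; simp
    set c : ℂ := p.coeff d / (φ d).leadingCoeff with hc
    have hq : (p - c • φ d).degree < (d : ℕ) := by
      rw [degree_lt_iff_coeff_zero]
      intro m hm
      by_cases hmd : m = d
      · subst hmd
        simp only [coeff_sub, coeff_smul, smul_eq_mul]
        have hcl : (φ m).coeff m = (φ m).leadingCoeff := by
          rw [← coeff_natDegree, hφd]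
        rw [hc, hcl, div_mul_cancel₀ _ hl, sub_self]
      · have h : d < m := lt_of_le_of_ne hm (Ne.symm hmd)
        rw [coeff_sub, coeff_smul, smul_eq_mul,
          coeff_eq_zero_of_degree_lt (lt_of_lt_of_le hp (by exact_mod_cast h)),
          coeff_eq_zero_of_degree_lt (by rw [hdeg d]; exact_mod_cast h)]
        ring
    have h1 : p - c • φ d ∈ Submodule.span ℂ (φ '' Set.Iio (d+1)) :=
      hmono (ih _ hq)
    have h2 : φ d ∈ Submodule.span ℂ (φ '' Set.Iio (d+1)) :=
      Submodule.subset_span ⟨d, by simp, rfl⟩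
    have := Submodule.add_mem _ h1 (Submodule.smul_mem _ c h2)
    simpa using this

private lemma cont_kernel (φ : ℕ → Polynomial ℂ) (n : ℕ) (w : ℂ) :
    Continuous (fun ζ => CDkernel φ n ζ w) := by
  unfold CDkernel
  exact continuous_finset_sum _ fun j _ =>
    continuous_const.mul ((φ j).continuous_aeval)

private lemma cont_conj_eval (p : Polynomial ℂ) :
    Continuous (fun ζ : ℂ => (starRingEnd ℂ) (p.eval ζ)) :=
  continuous_star.comp p.continuous_aeval

private lemma reproducing_s7 (μ : Measure ℂ) [IsFiniteMeasure μ]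
    (hcirc : ∀ᵐ ζ ∂μ, ‖ζ‖ = 1)
    (φ : ℕ → Polynomial ℂ) (hφ : IsOPUC μ φ) (w : ℂ) (n : ℕ)
    {p : Polynomial ℂ} (hp : p ∈ Submodule.span ℂ (φ '' Set.Iio (n+1))) :
    ∫ ζ, (starRingEnd ℂ) (p.eval ζ) * CDkernel φ n ζ w ∂μ
      = (starRingEnd ℂ) (p.eval w) := by
  obtain ⟨_, _, horth⟩ := hφ
  have hint : ∀ q : Polynomial ℂ,
      Integrable (fun ζ => (starRingEnd ℂ) (q.eval ζ) * CDkernel φ n ζ w) μ :=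
    fun q => integrable_of_cont μ hcirc ((cont_conj_eval q).mul (cont_kernel φ n w))
  induction hp using Submodule.span_induction with
  | mem q hq =>
    obtain ⟨j, hj, rfl⟩ := hq
    have hjn : j ∈ Finset.range (n+1) := Finset.mem_range.2 hj
    have : (fun ζ => (starRingEnd ℂ) ((φ j).eval ζ) * CDkernel φ n ζ w)
        = fun ζ => ∑ m ∈ Finset.range (n+1),
            (starRingEnd ℂ) ((φ m).eval w) *
              ((starRingEnd ℂ) ((φ j).eval ζ) * (φ m).eval ζ) := by
      funext ζ; unfold CDkernel
      rw [Finset.mul_sum]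
      exact Finset.sum_congr rfl fun m _ => by ring
    rw [this, integral_finset_sum]
    · have : ∀ m ∈ Finset.range (n+1),
          ∫ ζ, (starRingEnd ℂ) ((φ m).eval w) *
            ((starRingEnd ℂ) ((φ j).eval ζ) * (φ m).eval ζ) ∂μ
          = (starRingEnd ℂ) ((φ m).eval w) * if j = m then 1 else 0 := by
        intro m _
        rw [integral_const_mul, horth j m]
      rw [Finset.sum_congr rfl this]
      simp [Finset.sum_ite_eq, hjn]
    · intro m _
      exact (integrable_of_cont μ hcirc
        (continuous_const.mul ((cont_conj_eval (φ j)).mul ((φ m).continuous_aeval))))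
  | zero => simp
  | add q r hq hr ihq ihr =>
    have : (fun ζ => (starRingEnd ℂ) ((q + r).eval ζ) * CDkernel φ n ζ w)
        = fun ζ => (starRingEnd ℂ) (q.eval ζ) * CDkernel φ n ζ w
            + (starRingEnd ℂ) (r.eval ζ) * CDkernel φ n ζ w := by
      funext ζ; simp [eval_add, map_add]; ring
    rw [this, integral_add (hint q) (hint r), ihq, ihr, eval_add, map_add]
  | smul a q hq ihq =>
    have : (fun ζ => (starRingEnd ℂ) ((a • q).eval ζ) * CDkernel φ n ζ w)
        = fun ζ => (starRingEnd ℂ) a *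
            ((starRingEnd ℂ) (q.eval ζ) * CDkernel φ n ζ w) := by
      funext ζ; simp [smul_eq_mul]; ring
    rw [this, integral_const_mul, ihq]
    simp [smul_eq_mul]

/-- Orthogonality relations for CD kernels with respect to `dμ_w(ζ) = (1 - w̄ζ)dμ(ζ)`:
`∫ ζ̄^s K_n(ζ,w;μ) dμ_w(ζ) = 0` for `1 ≤ s ≤ n`. -/
theorem cd_kernel_orthogonality
    (μ : Measure ℂ) [IsFiniteMeasure μ]
    (hcirc : ∀ᵐ ζ ∂μ, ‖ζ‖ = 1)
    (hnt : Set.Infinite {ζ : ℂ | ∀ ε > 0, μ (Metric.ball ζ ε) ≠ 0})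
    (φ : ℕ → Polynomial ℂ) (hφ : IsOPUC μ φ)
    (w : ℂ) (n s : ℕ) (hs1 : 1 ≤ s) (hsn : s ≤ n) :
    ∫ ζ, ((starRingEnd ℂ) ζ) ^ s * CDkernel φ n ζ w *
      (1 - (starRingEnd ℂ) w * ζ) ∂μ = 0 := by
  obtain ⟨t, rfl⟩ : ∃ t, s = t + 1 := ⟨s - 1, (Nat.succ_pred_eq_of_pos hs1).symm⟩
  have hdeg := hφ.1
  have hmem : ∀ k : ℕ, k ≤ n →
      (X : Polynomial ℂ) ^ k ∈ Submodule.span ℂ (φ '' Set.Iio (n+1)) := by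
    intro k hk
    refine mem_span_of_deg φ hdeg (n+1) _ ?_
    rw [degree_X_pow]
    exact_mod_cast Nat.lt_succ_of_le hk
  have h1 : ∫ ζ, ((starRingEnd ℂ) ζ) ^ (t+1) * CDkernel φ n ζ w ∂μ
      = ((starRingEnd ℂ) w) ^ (t+1) := by
    have := reproducing_s7 μ hcirc φ hφ w n (hmem (t+1) hsn)
    simpa [map_pow] using this
  have h2 : ∫ ζ, ((starRingEnd ℂ) ζ) ^ t * CDkernel φ n ζ w ∂μ
      = ((starRingEnd ℂ) w) ^ t := by
    have := reproducing_s7 μ hcirc φ hφ w n (hmem t (le_trans (Nat.le_succ t) hsn))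
    simpa [map_pow] using this
  have hae : (fun ζ => ((starRingEnd ℂ) ζ) ^ (t+1) * CDkernel φ n ζ w *
        (1 - (starRingEnd ℂ) w * ζ))
      =ᵐ[μ] fun ζ => ((starRingEnd ℂ) ζ) ^ (t+1) * CDkernel φ n ζ w
        - (starRingEnd ℂ) w * (((starRingEnd ℂ) ζ) ^ t * CDkernel φ n ζ w) := by
    filter_upwards [hcirc] with ζ hζ
    have hcz : (starRingEnd ℂ) ζ * ζ = 1 := by
      rw [mul_comm, Complex.mul_conj]
      norm_cast
      simp [Complex.normSq_eq_norm_sq, hζ]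
    linear_combination (-(starRingEnd ℂ) w * ((starRingEnd ℂ) ζ) ^ t *
      CDkernel φ n ζ w) * hcz
  have hi1 : Integrable
      (fun ζ => ((starRingEnd ℂ) ζ) ^ (t+1) * CDkernel φ n ζ w) μ :=
    integrable_of_cont μ hcirc ((continuous_star.pow _).mul (cont_kernel φ n w))
  have hi2 : Integrable
      (fun ζ => (starRingEnd ℂ) w * (((starRingEnd ℂ) ζ) ^ t * CDkernel φ n ζ w)) μ :=
    (integrable_of_cont μ hcirc
      ((continuous_star.pow _).mul (cont_kernel φ n w))).const_mul _
  rw [integral_congr_ae hae, integral_sub hi1 hi2, h1, integral_const_mul, h2]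
  ring
end

section
/- Let μ be a nontrivial positive measure on the unit circle and |w| ≤ 1. Then ∫_T K_n(ζ,w;μ)(1 − w̄ζ) dμ(ζ) ≠ 0. -/
open MeasureTheory Complex Polynomial

lemma opuc_ne_zero (φ : ℕ → Polynomial ℂ) (hdeg : ∀ n, (φ n).degree = n) (m : ℕ) : φ m ≠ 0 := by
  intro h
  have hm := hdeg m
  rw [h, Polynomial.degree_zero] at hm
  exact absurd hm.symm (by exact_mod_cast WithBot.coe_ne_bot)

lemma cont_integrable (μ : Measure ℂ) [IsFiniteMeasure μ] (hcirc : ∀ᵐ ζ ∂μ, ‖ζ‖ = 1)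
    {E : Type*} [NormedAddCommGroup E] (f : ℂ → E) (hf : Continuous f) : Integrable f μ := by
  obtain ⟨C, hC⟩ := (isCompact_sphere (0:ℂ) 1).exists_bound_of_continuousOn hf.continuousOn
  refine ⟨hf.aestronglyMeasurable, ?_⟩
  apply HasFiniteIntegral.of_bounded (C := C)
  filter_upwards [hcirc] with ζ hζ
  exact hC ζ (by simpa [mem_sphere_iff_norm] using hζ)

lemma re_eq_one_norm_le_one {z : ℂ} (h1 : z.re = 1) (h2 : ‖z‖ ≤ 1) : z = 1 := by
  have hsq : z.re ^ 2 + z.im ^ 2 ≤ 1 := by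
    have h4 : Complex.normSq z = ‖z‖ ^ 2 := by rw [Complex.sq_norm]
    have h3 : Complex.normSq z ≤ 1 := by rw [h4]; nlinarith [norm_nonneg z]
    simpa [Complex.normSq_apply, sq] using h3
  have him : z.im = 0 := by nlinarith [sq_nonneg z.im]
  exact Complex.ext (by simp [h1]) (by simp [him])

lemma span_aux (φ : ℕ → Polynomial ℂ) (hdeg : ∀ n, (φ n).degree = n) :
    ∀ (k : ℕ) (p : Polynomial ℂ), p.degree ≤ k →
      ∃ c : ℕ → ℂ, p = ∑ j ∈ Finset.range (k+1), Polynomial.C (c j) * φ j := by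
  intro k
  induction k with
  | zero =>
    intro p hp
    set a := (φ 0).coeff 0 with ha
    have h0 : φ 0 = Polynomial.C a := eq_C_of_degree_le_zero (le_of_eq (hdeg 0))
    have hne : a ≠ 0 := by
      intro h
      exact opuc_ne_zero φ hdeg 0 (by rw [h0, h, map_zero])
    refine ⟨fun _ => p.coeff 0 / a, ?_⟩
    have hp0 : p = Polynomial.C (p.coeff 0) := eq_C_of_degree_le_zero (by exact_mod_cast hp)
    rw [Finset.sum_range_one]
    show p = Polynomial.C (p.coeff 0 / a) * φ 0
    rw [h0, ← Polynomial.C_mul, div_mul_cancel₀ _ hne, ← hp0]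
  | succ k ih =>
    intro p hp
    set l := (φ (k+1)).leadingCoeff with hl
    have hφne : φ (k+1) ≠ 0 := opuc_ne_zero φ hdeg (k+1)
    have hlne : l ≠ 0 := leadingCoeff_ne_zero.2 hφne
    have hnd : (φ (k+1)).natDegree = k+1 := natDegree_eq_of_degree_eq_some (hdeg (k+1))
    set q := p - Polynomial.C (p.coeff (k+1) / l) * φ (k+1) with hq
    have hqd : q.degree ≤ k := by
      refine Polynomial.degree_le_iff_coeff_zero q k |>.2 ?_
      intro m hm
      have hmk : k < m := by exact_mod_cast hm
      rcases eq_or_lt_of_le (Nat.succ_le_of_lt hmk) with he | hlt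
      · have hcoeff : q.coeff (k+1) = 0 := by
          simp only [hq, coeff_sub, coeff_C_mul]
          have hc' : (φ (k+1)).coeff (k+1) = l := by rw [hl, leadingCoeff, hnd]
          rw [hc', div_mul_cancel₀ _ hlne, sub_self]
        rwa [← he]
      · have hdp : p.degree < m := lt_of_le_of_lt hp (by exact_mod_cast hlt)
        have hdφ : (Polynomial.C (p.coeff (k+1) / l) * φ (k+1)).degree < m := by
          refine lt_of_le_of_lt (degree_mul_le _ _) ?_
          calc (Polynomial.C (p.coeff (k+1) / l)).degree + (φ (k+1)).degree
              ≤ 0 + ((k+1 : ℕ) : WithBot ℕ) := add_le_add degree_C_le (le_of_eq (hdeg (k+1)))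
            _ = ((k+1 : ℕ) : WithBot ℕ) := by simp
            _ < m := by exact_mod_cast hlt
        simp [hq, coeff_eq_zero_of_degree_lt hdp, coeff_eq_zero_of_degree_lt hdφ]
    obtain ⟨c, hc⟩ := ih q hqd
    refine ⟨fun j => if j = k+1 then p.coeff (k+1) / l else c j, ?_⟩
    rw [Finset.sum_range_succ]
    have hsum : ∑ j ∈ Finset.range (k+1),
        Polynomial.C (if j = k+1 then p.coeff (k+1) / l else c j) * φ j
        = ∑ j ∈ Finset.range (k+1), Polynomial.C (c j) * φ j := by
      apply Finset.sum_congr rfl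
      intro j hj
      rw [if_neg (by simp at hj; omega)]
    have hb : (fun j => if j = k+1 then p.coeff (k+1) / l else c j) (k+1) = p.coeff (k+1) / l := by simp
    rw [hsum, ← hc, hb, hq]
    ring

/-- For `|w| ≤ 1`, `∫ K_n(ζ,w;μ)(1 - w̄ζ) dμ(ζ) ≠ 0`. -/
theorem cd_kernel_integral_ne_zero
    (μ : Measure ℂ) [IsFiniteMeasure μ]
    (hcirc : ∀ᵐ ζ ∂μ, ‖ζ‖ = 1)
    (hnt : Set.Infinite {ζ : ℂ | ∀ ε > 0, μ (Metric.ball ζ ε) ≠ 0})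
    (φ : ℕ → Polynomial ℂ) (hφ : IsOPUC μ φ)
    (w : ℂ) (hw : ‖w‖ ≤ 1) (n : ℕ) :
    ∫ ζ, CDkernel φ n ζ w * (1 - (starRingEnd ℂ) w * ζ) ∂μ ≠ 0 := by
  obtain ⟨hdeg, hlead, horth⟩ := hφ
  have hint := fun (f : ℂ → ℂ) (hf : Continuous f) => cont_integrable μ hcirc f hf
  have hintR := fun (f : ℂ → ℝ) (hf : Continuous f) => cont_integrable μ hcirc f hf
  set Kp : Polynomial ℂ :=
    ∑ j ∈ Finset.range (n+1), Polynomial.C ((starRingEnd ℂ) ((φ j).eval w)) * φ j with hKp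
  set H : Polynomial ℂ := Kp * (1 - Polynomial.C ((starRingEnd ℂ) w) * Polynomial.X) with hH
  have hKeval : ∀ ζ, Kp.eval ζ = CDkernel φ n ζ w := by
    intro ζ
    simp [hKp, CDkernel, Polynomial.eval_finset_sum]
  have hHeval : ∀ ζ, H.eval ζ = CDkernel φ n ζ w * (1 - (starRingEnd ℂ) w * ζ) := by
    intro ζ
    simp [hH, hKeval ζ]
  intro hF0
  have hF : ∫ ζ, H.eval ζ ∂μ = 0 := by
    simp only [hHeval]; exact hF0
  -- Step A: for j ≤ n
  have stepA : ∀ j ∈ Finset.range (n+1),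
      ∫ ζ, (starRingEnd ℂ) ((φ j).eval ζ) * Kp.eval ζ ∂μ = (starRingEnd ℂ) ((φ j).eval w) := by
    intro j hj
    have hpt : ∀ ζ, (starRingEnd ℂ) ((φ j).eval ζ) * Kp.eval ζ
        = ∑ m ∈ Finset.range (n+1),
            (starRingEnd ℂ) ((φ m).eval w) * ((starRingEnd ℂ) ((φ j).eval ζ) * (φ m).eval ζ) := by
      intro ζ
      rw [hKp, Polynomial.eval_finset_sum, Finset.mul_sum]
      apply Finset.sum_congr rfl
      intro m _
      simp only [Polynomial.eval_mul, Polynomial.eval_C]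
      ring
    simp only [hpt]
    rw [integral_finset_sum _ (fun m _ => by
      apply hint
      exact continuous_const.mul ((Complex.continuous_conj.comp (φ j).continuous).mul (φ m).continuous))]
    have : ∀ m ∈ Finset.range (n+1),
        ∫ ζ, (starRingEnd ℂ) ((φ m).eval w) * ((starRingEnd ℂ) ((φ j).eval ζ) * (φ m).eval ζ) ∂μ
        = (starRingEnd ℂ) ((φ m).eval w) * (if j = m then 1 else 0) := by
      intro m _
      rw [integral_const_mul, horth j m]
    rw [Finset.sum_congr rfl this]
    simp [Finset.sum_ite_eq' (Finset.range (n+1)), hj]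
  -- Step 1: general p of degree ≤ n
  have step1 : ∀ p : Polynomial ℂ, p.degree ≤ (n : WithBot ℕ) →
      ∫ ζ, (starRingEnd ℂ) (p.eval ζ) * Kp.eval ζ ∂μ = (starRingEnd ℂ) (p.eval w) := by
    intro p hp
    obtain ⟨c, hc⟩ := span_aux φ hdeg n p hp
    have hpt : ∀ ζ, (starRingEnd ℂ) (p.eval ζ) * Kp.eval ζ
        = ∑ j ∈ Finset.range (n+1),
            (starRingEnd ℂ) (c j) * ((starRingEnd ℂ) ((φ j).eval ζ) * Kp.eval ζ) := by
      intro ζ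
      rw [hc, Polynomial.eval_finset_sum, map_sum, Finset.sum_mul]
      apply Finset.sum_congr rfl
      intro j _
      simp only [Polynomial.eval_mul, Polynomial.eval_C, map_mul]
      ring
    simp only [hpt]
    rw [integral_finset_sum _ (fun j _ => by
      apply hint
      exact continuous_const.mul ((Complex.continuous_conj.comp (φ j).continuous).mul Kp.continuous))]
    have heq : ∀ j ∈ Finset.range (n+1),
        ∫ ζ, (starRingEnd ℂ) (c j) * ((starRingEnd ℂ) ((φ j).eval ζ) * Kp.eval ζ) ∂μ
        = (starRingEnd ℂ) (c j) * (starRingEnd ℂ) ((φ j).eval w) := by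
      intro j hj
      rw [integral_const_mul, stepA j hj]
    rw [Finset.sum_congr rfl heq]
    rw [hc, Polynomial.eval_finset_sum, map_sum]
    apply Finset.sum_congr rfl
    intro j _
    simp [map_mul]
  -- Step 2: moments of H vanish
  have step2 : ∀ k : ℕ, k ≤ n → ∫ ζ, (starRingEnd ℂ) (ζ^k) * H.eval ζ ∂μ = 0 := by
    intro k hk
    match k with
    | 0 =>
      simpa using hF
    | (k'+1) =>
      have hpt : ∀ ζ, (starRingEnd ℂ) (ζ^(k'+1)) * H.eval ζ
          = (starRingEnd ℂ) (ζ^(k'+1)) * Kp.eval ζ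
            - (starRingEnd ℂ) w * (((starRingEnd ℂ) (ζ^(k'+1)) * ζ) * Kp.eval ζ) := by
        intro ζ
        rw [hH]
        simp only [Polynomial.eval_mul, Polynomial.eval_sub, Polynomial.eval_one,
          Polynomial.eval_C, Polynomial.eval_X]
        ring
      simp only [hpt]
      have hc1 : Continuous fun ζ : ℂ => (starRingEnd ℂ) (ζ^(k'+1)) * Kp.eval ζ :=
        (Complex.continuous_conj.comp (continuous_pow _)).mul Kp.continuous
      have hc2 : Continuous fun ζ : ℂ => ((starRingEnd ℂ) (ζ^(k'+1)) * ζ) * Kp.eval ζ :=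
        ((Complex.continuous_conj.comp (continuous_pow _)).mul continuous_id).mul Kp.continuous
      rw [integral_sub (hint _ hc1) ((hint _ hc2).const_mul _)]
      rw [integral_const_mul]
      have h1 : ∫ ζ, (starRingEnd ℂ) (ζ^(k'+1)) * Kp.eval ζ ∂μ = (starRingEnd ℂ) (w^(k'+1)) := by
        have := step1 (Polynomial.X^(k'+1)) (by
          exact (Polynomial.degree_X_pow_le (R := ℂ) (k'+1)).trans (by exact_mod_cast hk))
        simpa using this
      have h2 : ∫ ζ, ((starRingEnd ℂ) (ζ^(k'+1)) * ζ) * Kp.eval ζ ∂μ = (starRingEnd ℂ) (w^k') := by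
        have hae : ∀ᵐ ζ ∂μ, ((starRingEnd ℂ) (ζ^(k'+1)) * ζ) * Kp.eval ζ
            = (starRingEnd ℂ) (ζ^k') * Kp.eval ζ := by
          filter_upwards [hcirc] with ζ hζ
          have hcz : (starRingEnd ℂ) ζ * ζ = 1 := by
            rw [Complex.conj_mul']
            rw [hζ]; norm_num
          have : (starRingEnd ℂ) (ζ^(k'+1)) * ζ = (starRingEnd ℂ) (ζ^k') := by
            rw [pow_succ, map_mul]
            rw [mul_assoc, hcz, mul_one]
          rw [this]
        rw [integral_congr_ae hae]
        have := step1 (Polynomial.X^k') (by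
          exact (Polynomial.degree_X_pow_le (R := ℂ) k').trans (by exact_mod_cast Nat.le_of_succ_le hk))
        simpa using this
      rw [h1, h2]
      rw [← map_mul, ← pow_succ']
      ring
  -- Step 3
  have hKdeg : Kp.natDegree ≤ n := by
    have : Kp.degree ≤ (n : WithBot ℕ) := by
      rw [hKp]
      refine (Polynomial.degree_sum_le _ _).trans ?_
      refine Finset.sup_le ?_
      intro j hj
      refine (Polynomial.degree_mul_le _ _).trans ?_
      calc (Polynomial.C ((starRingEnd ℂ) ((φ j).eval w))).degree + (φ j).degree
          ≤ 0 + ((j:ℕ) : WithBot ℕ) := add_le_add Polynomial.degree_C_le (le_of_eq (hdeg j))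
        _ = ((j:ℕ) : WithBot ℕ) := by simp
        _ ≤ (n : WithBot ℕ) := by exact_mod_cast Nat.lt_succ_iff.1 (Finset.mem_range.1 hj)
    exact Polynomial.natDegree_le_iff_degree_le.2 this
  have step3 : ∫ ζ, (starRingEnd ℂ) (Kp.eval ζ) * H.eval ζ ∂μ = 0 := by
    have hpt : ∀ ζ, (starRingEnd ℂ) (Kp.eval ζ) * H.eval ζ
        = ∑ i ∈ Finset.range (n+1),
            (starRingEnd ℂ) (Kp.coeff i) * ((starRingEnd ℂ) (ζ^i) * H.eval ζ) := by
      intro ζ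
      rw [Polynomial.eval_eq_sum_range' (Nat.lt_succ_of_le hKdeg), map_sum, Finset.sum_mul]
      apply Finset.sum_congr rfl
      intro i _
      rw [map_mul]
      ring
    simp only [hpt]
    rw [integral_finset_sum _ (fun i _ => by
      apply hint
      exact continuous_const.mul ((Complex.continuous_conj.comp (continuous_pow _)).mul H.continuous))]
    refine Finset.sum_eq_zero ?_
    intro i hi
    rw [integral_const_mul, step2 i (Nat.lt_succ_iff.1 (Finset.mem_range.1 hi)), mul_zero]
  -- Step 4: real part
  set g : ℂ → ℝ := fun ζ => ‖Kp.eval ζ‖^2 * (1 - ((starRingEnd ℂ) w * ζ).re) with hg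
  have hgpt : ∀ ζ, ((starRingEnd ℂ) (Kp.eval ζ) * H.eval ζ).re = g ζ := by
    intro ζ
    have hHe : H.eval ζ = Kp.eval ζ * (1 - (starRingEnd ℂ) w * ζ) := by
      rw [hH]; simp
    rw [hHe, ← mul_assoc, Complex.conj_mul']
    rw [hg]
    simp only []
    rw [← Complex.ofReal_pow, Complex.re_ofReal_mul]
    simp
  have hgcont : Continuous g := by
    apply Continuous.mul
    · exact (Kp.continuous.norm).pow 2
    · exact continuous_const.sub (Complex.continuous_re.comp (continuous_const.mul continuous_id))
  have hgnn : 0 ≤ᵐ[μ] g := by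
    filter_upwards [hcirc] with ζ hζ
    have : ((starRingEnd ℂ) w * ζ).re ≤ 1 := by
      calc ((starRingEnd ℂ) w * ζ).re ≤ ‖(starRingEnd ℂ) w * ζ‖ := Complex.re_le_norm _
        _ = ‖w‖ * ‖ζ‖ := by rw [norm_mul]; simp
        _ ≤ 1 := by rw [hζ, mul_one]; exact hw
    have h1 : (0:ℝ) ≤ ‖Kp.eval ζ‖^2 := sq_nonneg _
    have h2 : (0:ℝ) ≤ 1 - ((starRingEnd ℂ) w * ζ).re := by linarith
    exact mul_nonneg h1 h2
  have hgzero : g =ᵐ[μ] 0 := by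
    rw [← integral_eq_zero_iff_of_nonneg_ae hgnn (hintR g hgcont)]
    have : ∫ ζ, ((starRingEnd ℂ) (Kp.eval ζ) * H.eval ζ).re ∂μ
        = (∫ ζ, (starRingEnd ℂ) (Kp.eval ζ) * H.eval ζ ∂μ).re :=
      integral_re (hint _ ((Complex.continuous_conj.comp Kp.continuous).mul H.continuous))
    have e1 : ∫ ζ, g ζ ∂μ = ∫ ζ, ((starRingEnd ℂ) (Kp.eval ζ) * H.eval ζ).re ∂μ :=
      integral_congr_ae (Filter.Eventually.of_forall (fun ζ => (hgpt ζ).symm))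
    rw [e1, this, step3]
    simp
  -- Step 5: H.eval = 0 a.e.
  have hH0 : ∀ᵐ ζ ∂μ, H.eval ζ = 0 := by
    filter_upwards [hgzero, hcirc] with ζ hgζ hζ
    have hHe : H.eval ζ = Kp.eval ζ * (1 - (starRingEnd ℂ) w * ζ) := by rw [hH]; simp
    have : ‖Kp.eval ζ‖^2 * (1 - ((starRingEnd ℂ) w * ζ).re) = 0 := hgζ
    rcases mul_eq_zero.1 this with h | h
    · have : Kp.eval ζ = 0 := by
        have := sq_eq_zero_iff.1 h
        exact norm_eq_zero.1 this
      rw [hHe, this, zero_mul]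
    · have hre : ((starRingEnd ℂ) w * ζ).re = 1 := by linarith
      have hnorm : ‖(starRingEnd ℂ) w * ζ‖ ≤ 1 := by
        rw [norm_mul, RCLike.norm_conj, hζ, mul_one]
        exact hw
      have := re_eq_one_norm_le_one hre hnorm
      rw [hHe, this]
      simp
  -- Step 6: H = 0 as a polynomial
  have hHzero : H = 0 := by
    apply Polynomial.eq_zero_of_infinite_isRoot
    refine Set.Infinite.mono ?_ hnt
    intro ζ0 hζ0
    by_contra hne
    have hne' : H.eval ζ0 ≠ 0 := hne
    have hopen : IsOpen {ζ : ℂ | H.eval ζ ≠ 0} := isOpen_ne.preimage H.continuous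
    obtain ⟨ε, hε, hball⟩ := Metric.isOpen_iff.1 hopen ζ0 hne'
    have hnull : μ {ζ : ℂ | H.eval ζ ≠ 0} = 0 := by
      have h5 := hH0
      rw [MeasureTheory.ae_iff] at h5
      simpa using h5
    exact hζ0 ε hε (measure_mono_null hball hnull)
  -- Step 7: Kp = 0
  have hmul : (1 - Polynomial.C ((starRingEnd ℂ) w) * Polynomial.X : Polynomial ℂ) ≠ 0 := by
    intro h
    have h6 := congrArg (Polynomial.eval 0) h
    simp at h6
  have hKzero : Kp = 0 := by
    rcases mul_eq_zero.1 (hH.symm.trans hHzero) with h | h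
    · exact h
    · exact absurd h hmul
  -- Step 8: contradiction
  have hKw : Kp.eval w = 0 := by rw [hKzero]; simp
  have hsum : ∑ j ∈ Finset.range (n+1), (‖(φ j).eval w‖^2 : ℝ) = 0 := by
    have h7 : Kp.eval w = ∑ j ∈ Finset.range (n+1), ((‖(φ j).eval w‖^2 : ℝ) : ℂ) := by
      rw [hKp, Polynomial.eval_finset_sum]
      apply Finset.sum_congr rfl
      intro j _
      rw [Polynomial.eval_mul, Polynomial.eval_C, Complex.conj_mul']
      norm_cast
    have h2 := hKw
    rw [h7, ← Complex.ofReal_sum] at h2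
    exact_mod_cast h2
  have h0 : ‖(φ 0).eval w‖^2 = 0 :=
    (Finset.sum_eq_zero_iff_of_nonneg (fun j _ => sq_nonneg _)).1 hsum 0
      (Finset.mem_range.2 (Nat.succ_pos n))
  have hφ0 : (φ 0).eval w = 0 := norm_eq_zero.1 (pow_eq_zero_iff (by norm_num) |>.1 h0)
  have hC : φ 0 = Polynomial.C ((φ 0).coeff 0) := Polynomial.eq_C_of_degree_le_zero (le_of_eq (hdeg 0))
  have hc0 : (φ 0).coeff 0 = 0 := by rw [hC] at hφ0; simpa using hφ0
  have hlc : (φ 0).leadingCoeff = (φ 0).coeff 0 := by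
    rw [Polynomial.leadingCoeff, Polynomial.natDegree_eq_of_degree_eq_some (hdeg 0)]
  have hpos := (hlead 0).1
  rw [hlc, hc0] at hpos
  simp at hpos
end

section
/- Let μ be a nontrivial positive measure on the unit circle and |w| ≥ 1. If P is a polynomial of degree exactly n satisfying ∫_T ζ̄^s P(ζ)(1 − w̄ζ)dμ(ζ) = 0 for all 1 ≤ s ≤ n, then P is a constant multiple of K_n(·,w;μ). -/
open MeasureTheory Complex Polynomial

/-- Every polynomial of degree < m is a linear combination of `φ 0, …, φ (m-1)`
when `deg (φ j) = j`. -/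
lemma span_aux_s9 (φ : ℕ → Polynomial ℂ) (hd : ∀ k, (φ k).degree = k) :
    ∀ (m : ℕ) (Q : Polynomial ℂ), Q.degree < (m : WithBot ℕ) →
      ∃ a : ℕ → ℂ, Q = ∑ j ∈ Finset.range m, Polynomial.C (a j) * φ j := by
  intro m
  induction m with
  | zero =>
    intro Q hQ
    refine ⟨0, ?_⟩
    have : Q = 0 := by
      ext k
      exact (Q.degree_lt_iff_coeff_zero 0).1 (by exact_mod_cast hQ) k (Nat.zero_le k)
    simp [this]
  | succ m ih =>
    intro Q hQ
    have hlc : (φ m).leadingCoeff ≠ 0 := by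
      intro h
      have := Polynomial.degree_eq_bot.2 (Polynomial.leadingCoeff_eq_zero.1 h)
      rw [hd m] at this
      simp at this
    have hnd : (φ m).natDegree = m := Polynomial.natDegree_eq_of_degree_eq_some (hd m)
    set c := Q.coeff m / (φ m).leadingCoeff with hc
    have hR : (Q - Polynomial.C c * φ m).degree < (m : WithBot ℕ) := by
      rw [Polynomial.degree_lt_iff_coeff_zero]
      intro k hk
      rcases eq_or_lt_of_le hk with hk | hk
      · simp only [Polynomial.coeff_sub, Polynomial.coeff_C_mul]
        rw [← hk]
        have : (φ m).coeff m = (φ m).leadingCoeff := by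
          rw [Polynomial.leadingCoeff, hnd]
        rw [this, hc, div_mul_cancel₀ _ hlc, sub_self]
      · have h1 : Q.coeff k = 0 :=
          Polynomial.coeff_eq_zero_of_degree_lt (lt_of_lt_of_le hQ (by exact_mod_cast hk))
        have h2 : (φ m).coeff k = 0 :=
          Polynomial.coeff_eq_zero_of_degree_lt (by rw [hd m]; exact_mod_cast hk)
        simp [h1, h2]
    obtain ⟨a, ha⟩ := ih _ hR
    refine ⟨Function.update a m c, ?_⟩
    rw [Finset.sum_range_succ, Function.update_self]
    have : ∑ j ∈ Finset.range m, Polynomial.C (Function.update a m c j) * φ j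
        = ∑ j ∈ Finset.range m, Polynomial.C (a j) * φ j := by
      apply Finset.sum_congr rfl
      intro j hj
      rw [Function.update_of_ne (Nat.ne_of_lt (Finset.mem_range.1 hj))]
    rw [this, ← ha]
    ring

/-- Characterization of the CD kernel for `|w| ≥ 1`: any polynomial of degree exactly `n`
satisfying the orthogonality relations is a constant multiple of `K_n(·,w;μ)`. -/
theorem cd_kernel_characterization_outside
    (μ : Measure ℂ) [IsFiniteMeasure μ]
    (hcirc : ∀ᵐ ζ ∂μ, ‖ζ‖ = 1)
    (hnt : Set.Infinite {ζ : ℂ | ∀ ε > 0, μ (Metric.ball ζ ε) ≠ 0})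
    (φ : ℕ → Polynomial ℂ) (hφ : IsOPUC μ φ)
    (w : ℂ) (hw : 1 ≤ ‖w‖) (n : ℕ)
    (P : Polynomial ℂ) (hdeg : P.degree = n)
    (horth : ∀ s : ℕ, 1 ≤ s → s ≤ n →
      ∫ ζ, ((starRingEnd ℂ) ζ) ^ s * P.eval ζ * (1 - (starRingEnd ℂ) w * ζ) ∂μ = 0) :
    ∃ c : ℂ, ∀ z : ℂ, P.eval z = c * CDkernel φ n z w := by
  obtain ⟨hφdeg, hφlc, hφon⟩ := hφ
  -- integrability of continuous functions
  have intg : ∀ f : ℂ → ℂ, Continuous f → Integrable f μ := by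
    intro f hf
    obtain ⟨C, hC⟩ := (isCompact_sphere (0:ℂ) 1).exists_bound_of_continuousOn
      hf.continuousOn
    refine Integrable.mono' (integrable_const C) hf.aestronglyMeasurable ?_
    filter_upwards [hcirc] with ζ hζ
    exact hC ζ (mem_sphere_zero_iff_norm.2 hζ)
  -- the moments
  set M : ℕ → ℂ := fun s => ∫ ζ, ((starRingEnd ℂ) ζ) ^ s * P.eval ζ ∂μ with hM
  have contM : ∀ s : ℕ, Continuous fun ζ : ℂ => ((starRingEnd ℂ) ζ) ^ s * P.eval ζ :=
    fun s => (continuous_star.pow s).mul P.continuous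
  have hstep : ∀ s : ℕ, 1 ≤ s → s ≤ n → M s = (starRingEnd ℂ) w * M (s - 1) := by
    intro s hs1 hs2
    obtain ⟨t, rfl⟩ : ∃ t, s = t + 1 := ⟨s - 1, (Nat.succ_pred_eq_of_pos hs1).symm⟩
    have key : ∫ ζ, (((starRingEnd ℂ) ζ) ^ (t+1) * P.eval ζ
        - (starRingEnd ℂ) w * (((starRingEnd ℂ) ζ) ^ t * P.eval ζ)) ∂μ = 0 := by
      rw [← horth (t+1) hs1 hs2]
      apply integral_congr_ae
      filter_upwards [hcirc] with ζ hζ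
      have h1 : (starRingEnd ℂ) ζ * ζ = 1 := by
        rw [Complex.conj_mul', hζ]; norm_num
      linear_combination ((starRingEnd ℂ) w * ((starRingEnd ℂ) ζ) ^ t * P.eval ζ) * h1
    have := integral_sub (intg _ (contM (t+1)))
      ((intg _ (contM t)).const_mul ((starRingEnd ℂ) w))
    rw [key] at this
    rw [integral_const_mul] at this
    have h2 : M (t+1) - (starRingEnd ℂ) w * M t = 0 := this.symm
    simpa [Nat.add_sub_cancel] using sub_eq_zero.1 h2
  have hMs : ∀ s : ℕ, s ≤ n → M s = ((starRingEnd ℂ) w) ^ s * M 0 := by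
    intro s
    induction s with
    | zero => intro _; simp
    | succ t ih =>
      intro hts
      rw [hstep (t+1) (Nat.le_add_left 1 t) hts]
      simp only [Nat.add_sub_cancel]
      rw [ih (Nat.le_of_succ_le hts), pow_succ]
      ring
  -- inner products with φ j
  have hinner : ∀ j : ℕ, j ≤ n →
      (∫ ζ, (starRingEnd ℂ) ((φ j).eval ζ) * P.eval ζ ∂μ)
        = (starRingEnd ℂ) ((φ j).eval w) * M 0 := by
    intro j hj
    have hnd : (φ j).natDegree = j := Polynomial.natDegree_eq_of_degree_eq_some (hφdeg j)
    have hexp : ∀ z : ℂ, (φ j).eval z = ∑ k ∈ Finset.range (j+1), (φ j).coeff k * z ^ k :=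
      fun z => Polynomial.eval_eq_sum_range' (by omega) z
    have hint : ∀ k ∈ Finset.range (j+1), Integrable
        (fun ζ => (starRingEnd ℂ) ((φ j).coeff k) * ((starRingEnd ℂ) ζ ^ k * P.eval ζ)) μ :=
      fun k _ => (intg _ (contM k)).const_mul _
    have h1 : (∫ ζ, (starRingEnd ℂ) ((φ j).eval ζ) * P.eval ζ ∂μ)
        = ∑ k ∈ Finset.range (j+1),
            (starRingEnd ℂ) ((φ j).coeff k) * M k := by
      calc (∫ ζ, (starRingEnd ℂ) ((φ j).eval ζ) * P.eval ζ ∂μ)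
          = ∫ ζ, ∑ k ∈ Finset.range (j+1),
              (starRingEnd ℂ) ((φ j).coeff k) * ((starRingEnd ℂ) ζ ^ k * P.eval ζ) ∂μ := by
            apply integral_congr_ae
            refine Filter.Eventually.of_forall fun ζ => ?_
            simp only [hexp ζ, map_sum, Finset.sum_mul]
            apply Finset.sum_congr rfl
            intro k _
            simp only [map_mul, map_pow]
            ring
        _ = ∑ k ∈ Finset.range (j+1), ∫ ζ,
              (starRingEnd ℂ) ((φ j).coeff k) * ((starRingEnd ℂ) ζ ^ k * P.eval ζ) ∂μ :=
            integral_finset_sum _ hint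
        _ = ∑ k ∈ Finset.range (j+1), (starRingEnd ℂ) ((φ j).coeff k) * M k :=
            Finset.sum_congr rfl fun k _ => integral_const_mul _ _
    rw [h1]
    have h2 : ∀ k ∈ Finset.range (j+1), (starRingEnd ℂ) ((φ j).coeff k) * M k
        = (starRingEnd ℂ) ((φ j).coeff k * w ^ k) * M 0 := by
      intro k hk
      rw [hMs k (by have := Finset.mem_range.1 hk; omega)]
      simp only [map_mul, map_pow]
      ring
    rw [Finset.sum_congr rfl h2, ← Finset.sum_mul, ← map_sum, ← hexp w]
  -- expand P in the basis
  obtain ⟨a, ha⟩ := span_aux_s9 φ hφdeg (n+1) P (by rw [hdeg]; exact_mod_cast Nat.lt_succ_self n)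
  -- coefficients from orthonormality
  have hcoeff : ∀ j ∈ Finset.range (n+1),
      a j = (starRingEnd ℂ) ((φ j).eval w) * M 0 := by
    intro j hj
    have hj' := Finset.mem_range.1 hj
    have h3 : (∫ ζ, (starRingEnd ℂ) ((φ j).eval ζ) * P.eval ζ ∂μ) = a j := by
      have hPe : ∀ ζ : ℂ, P.eval ζ = ∑ i ∈ Finset.range (n+1), a i * (φ i).eval ζ := by
        intro ζ
        rw [ha]
        simp [Polynomial.eval_finset_sum]
      have hint2 : ∀ i ∈ Finset.range (n+1), Integrable
          (fun ζ => a i * ((starRingEnd ℂ) ((φ j).eval ζ) * (φ i).eval ζ)) μ := by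
        intro i _
        exact (intg _ (((φ j).continuous.star).mul (φ i).continuous)).const_mul _
      have : (∫ ζ, (starRingEnd ℂ) ((φ j).eval ζ) * P.eval ζ ∂μ)
          = ∑ i ∈ Finset.range (n+1),
              a i * ∫ ζ, (starRingEnd ℂ) ((φ j).eval ζ) * (φ i).eval ζ ∂μ := by
        calc (∫ ζ, (starRingEnd ℂ) ((φ j).eval ζ) * P.eval ζ ∂μ)
            = ∫ ζ, ∑ i ∈ Finset.range (n+1),
                a i * ((starRingEnd ℂ) ((φ j).eval ζ) * (φ i).eval ζ) ∂μ := by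
              apply integral_congr_ae
              refine Filter.Eventually.of_forall fun ζ => ?_
              simp only [hPe ζ, Finset.mul_sum]
              apply Finset.sum_congr rfl
              intro i _
              ring
          _ = ∑ i ∈ Finset.range (n+1), ∫ ζ,
                a i * ((starRingEnd ℂ) ((φ j).eval ζ) * (φ i).eval ζ) ∂μ :=
              integral_finset_sum _ hint2
          _ = ∑ i ∈ Finset.range (n+1),
                a i * ∫ ζ, (starRingEnd ℂ) ((φ j).eval ζ) * (φ i).eval ζ ∂μ :=
              Finset.sum_congr rfl fun i _ => integral_const_mul _ _
      rw [this]
      rw [Finset.sum_congr rfl (fun i _ => by rw [hφon j i])]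
      simp [Finset.sum_ite_eq' (Finset.range (n+1)) j, hj]
    rw [← (hinner j (by omega)), h3]
  refine ⟨M 0, fun z => ?_⟩
  rw [ha]
  simp only [Polynomial.eval_finset_sum, Polynomial.eval_mul, Polynomial.eval_C, CDkernel,
    Finset.mul_sum]
  apply Finset.sum_congr rfl
  intro j hj
  rw [hcoeff j hj]
  ring
end

section
/- Let μ be a nontrivial positive measure on the unit circle and |w| ≤ 1. If P is a polynomial of degree at most n satisfying ∫_T ζ̄^s P(ζ)(1 − w̄ζ)dμ(ζ) = 0 for all 1 ≤ s ≤ n and ∫_T P(ζ)(1 − w̄ζ)dμ(ζ) ≠ 0, then P is a nonzero constant multiple of K_n(·,w;μ). -/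
open MeasureTheory Complex Polynomial

lemma phi_coeff_ne (φ : ℕ → Polynomial ℂ) (hφd : ∀ k, (φ k).degree = k) (k : ℕ) :
    (φ k).coeff k ≠ 0 := by
  have hnd : (φ k).natDegree = k := natDegree_eq_of_degree_eq_some (hφd k)
  have hne : (φ k) ≠ 0 := by
    intro h
    have := hφd k
    rw [h, degree_zero] at this
    exact (by simp : (⊥ : WithBot ℕ) ≠ (k : WithBot ℕ)) this
  have := mt leadingCoeff_eq_zero.mp hne
  rwa [leadingCoeff, hnd] at this

lemma mem_span_aux (φ : ℕ → Polynomial ℂ) (hφd : ∀ k, (φ k).degree = k) (m : ℕ) :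
    ∀ P : Polynomial ℂ, P.degree ≤ m → ∃ a : ℕ → ℂ, P = ∑ j ∈ Finset.range (m+1), a j • φ j := by
  have hc := phi_coeff_ne φ hφd
  induction m with
  | zero =>
    intro P hP
    refine ⟨fun _ => P.coeff 0 / (φ 0).coeff 0, ?_⟩
    have h0 : φ 0 = C ((φ 0).coeff 0) := (eq_C_of_degree_le_zero (le_of_eq (hφd 0)))
    have hP0 : P = C (P.coeff 0) := eq_C_of_degree_le_zero hP
    rw [Finset.sum_range_one, smul_eq_C_mul]
    nth_rewrite 1 [hP0]; nth_rewrite 2 [h0]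
    rw [← C_mul, div_mul_cancel₀ _ (hc 0)]
  | succ m ih =>
    intro P hP
    set L := P.coeff (m+1) / (φ (m+1)).coeff (m+1) with hL
    have hdeg' : (P - L • φ (m+1)).degree ≤ m := by
      rw [degree_le_iff_coeff_zero]
      intro k hk
      have hk1 : m + 1 ≤ k := by exact_mod_cast Nat.lt_iff_add_one_le.mp (by exact_mod_cast hk)
      rcases eq_or_lt_of_le hk1 with h | h
      · rw [coeff_sub, coeff_smul, ← h, smul_eq_mul, hL, div_mul_cancel₀ _ (hc (m+1)), sub_self]
      · rw [coeff_sub, coeff_smul, coeff_eq_zero_of_degree_lt (lt_of_le_of_lt hP (by exact_mod_cast h)),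
          coeff_eq_zero_of_degree_lt (lt_of_le_of_lt (le_of_eq (hφd (m+1))) (by exact_mod_cast h)),
          smul_zero, sub_self]
    obtain ⟨a, ha⟩ := ih _ hdeg'
    refine ⟨fun j => if j = m + 1 then L else a j, ?_⟩
    rw [Finset.sum_range_succ]
    have h2 : ∑ j ∈ Finset.range (m+1), (if j = m + 1 then L else a j) • φ j
        = ∑ j ∈ Finset.range (m+1), a j • φ j := by
      apply Finset.sum_congr rfl
      intro j hj
      rw [if_neg (by simp at hj; omega)]
    rw [h2, ← ha]
    simp
lemma integrable_circ (μ : Measure ℂ) [IsFiniteMeasure μ] (hcirc : ∀ᵐ ζ ∂μ, ‖ζ‖ = 1)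
    {g : ℂ → ℂ} (hg : Continuous g) : Integrable g μ := by
  obtain ⟨C, hC⟩ := (isCompact_sphere (0:ℂ) 1).exists_bound_of_continuousOn hg.continuousOn
  refine ⟨hg.aestronglyMeasurable, ?_⟩
  refine MeasureTheory.HasFiniteIntegral.of_bounded (C := C) ?_
  filter_upwards [hcirc] with ζ hζ
  exact hC ζ (by simpa [Metric.mem_sphere, dist_zero_right] using hζ)

-- swap lemma
lemma int_swap (μ : Measure ℂ) (p q : Polynomial ℂ) :
    ∫ ζ, (starRingEnd ℂ) (p.eval ζ) * q.eval ζ ∂μ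
      = (starRingEnd ℂ) (∫ ζ, (starRingEnd ℂ) (q.eval ζ) * p.eval ζ ∂μ) := by
  rw [← integral_conj]
  congr 1; funext ζ
  simp [mul_comm]

-- key: integral of conj φ_k against a span element
lemma int_phi_sum (μ : Measure ℂ) [IsFiniteMeasure μ] (hcirc : ∀ᵐ ζ ∂μ, ‖ζ‖ = 1)
    (φ : ℕ → Polynomial ℂ)
    (hon : ∀ m n, ∫ ζ, (starRingEnd ℂ) ((φ m).eval ζ) * (φ n).eval ζ ∂μ =
      if m = n then 1 else 0)
    (k m : ℕ) (a : ℕ → ℂ) :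
    ∫ ζ, (starRingEnd ℂ) ((φ k).eval ζ) *
        (∑ j ∈ Finset.range (m+1), a j • φ j).eval ζ ∂μ
      = if k ∈ Finset.range (m+1) then a k else 0 := by
  have h1 : ∀ ζ : ℂ, (starRingEnd ℂ) ((φ k).eval ζ) *
        (∑ j ∈ Finset.range (m+1), a j • φ j).eval ζ
      = ∑ j ∈ Finset.range (m+1), a j *
          ((starRingEnd ℂ) ((φ k).eval ζ) * (φ j).eval ζ) := by
    intro ζ
    rw [eval_finset_sum, Finset.mul_sum]
    apply Finset.sum_congr rfl
    intro j _
    simp [smul_eq_C_mul]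
    ring
  simp_rw [h1]
  rw [integral_finset_sum]
  · have h2 : ∀ j ∈ Finset.range (m+1),
        ∫ ζ, a j * ((starRingEnd ℂ) ((φ k).eval ζ) * (φ j).eval ζ) ∂μ
          = if k = j then a j else 0 := by
      intro j _
      rw [integral_const_mul, hon k j]
      split <;> simp
    rw [Finset.sum_congr rfl h2, Finset.sum_ite_eq]
  · intro j _
    exact integrable_circ μ hcirc (by continuity)

lemma phi_eval_ne_outside (μ : Measure ℂ) [IsFiniteMeasure μ] (hcirc : ∀ᵐ ζ ∂μ, ‖ζ‖ = 1)
    (φ : ℕ → Polynomial ℂ) (hφd : ∀ k, (φ k).degree = k)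
    (hon : ∀ m n, ∫ ζ, (starRingEnd ℂ) ((φ m).eval ζ) * (φ n).eval ζ ∂μ =
      if m = n then 1 else 0)
    (m : ℕ) (hm : 1 ≤ m) (z₀ : ℂ) (hz : 1 ≤ ‖z₀‖) : (φ m).eval z₀ ≠ 0 := by
  intro h0
  obtain ⟨q, hq⟩ := dvd_iff_isRoot.mpr h0
  -- degree of q
  have hφne : φ m ≠ 0 := fun h => by
    have := hφd m; rw [h, degree_zero] at this
    exact (by simp : (⊥ : WithBot ℕ) ≠ (m : WithBot ℕ)) this
  have hqne : q ≠ 0 := fun h => hφne (by rw [hq, h, mul_zero])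
  have hdq : q.degree ≤ (m - 1 : ℕ) := by
    have h1 : (φ m).natDegree = (X - C z₀).natDegree + q.natDegree := by
      rw [hq, natDegree_mul (X_sub_C_ne_zero z₀) hqne]
    rw [natDegree_eq_of_degree_eq_some (hφd m), natDegree_X_sub_C] at h1
    calc q.degree ≤ q.natDegree := degree_le_natDegree
    _ = ((m - 1 : ℕ) : WithBot ℕ) := by norm_cast; omega
  obtain ⟨a, ha⟩ := mem_span_aux φ hφd (m-1) q hdq
  have hrange : m - 1 + 1 = m := by omega
  rw [hrange] at ha
  -- orthogonality of q and φ m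
  have horth1 : ∫ ζ, (starRingEnd ℂ) ((φ m).eval ζ) * q.eval ζ ∂μ = 0 := by
    rw [ha]
    have := int_phi_sum μ hcirc φ hon m (m-1) a
    rw [hrange] at this
    rw [this, if_neg (by simp)]
  have horth2 : ∫ ζ, (starRingEnd ℂ) (q.eval ζ) * (φ m).eval ζ ∂μ = 0 := by
    rw [int_swap, horth1, map_zero]
  -- X * q = φ m + z₀ • q
  have hXq : X * q = φ m + C z₀ * q := by rw [hq]; ring
  -- the two evaluations of ∫ |ζ q(ζ)|²
  set t : ℂ := ∫ ζ, (starRingEnd ℂ) (q.eval ζ) * q.eval ζ ∂μ with ht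
  have key : t = 1 + ((normSq z₀ : ℝ) : ℂ) * t := by
    have e1 : ∫ ζ, (starRingEnd ℂ) ((X * q).eval ζ) * (X * q).eval ζ ∂μ = t := by
      rw [ht]
      apply integral_congr_ae
      filter_upwards [hcirc] with ζ hζ
      have hns1 : normSq ζ = 1 := by
        rw [Complex.normSq_eq_norm_sq, hζ]; norm_num
      have h1 : (starRingEnd ℂ) ζ * ζ = 1 := by
        rw [← Complex.normSq_eq_conj_mul_self, hns1, Complex.ofReal_one]
      simp only [eval_mul, eval_X, map_mul]
      calc (starRingEnd ℂ) ζ * (starRingEnd ℂ) (q.eval ζ) * (ζ * q.eval ζ)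
          = ((starRingEnd ℂ) ζ * ζ) * ((starRingEnd ℂ) (q.eval ζ) * q.eval ζ) := by ring
        _ = (starRingEnd ℂ) (q.eval ζ) * q.eval ζ := by rw [h1, one_mul]
    have e2 : ∫ ζ, (starRingEnd ℂ) ((X * q).eval ζ) * (X * q).eval ζ ∂μ
        = 1 + ((normSq z₀ : ℝ) : ℂ) * t := by
      simp_rw [hXq]
      have expand : ∀ ζ : ℂ, (starRingEnd ℂ) ((φ m + C z₀ * q).eval ζ) * (φ m + C z₀ * q).eval ζ
          = ((starRingEnd ℂ) ((φ m).eval ζ) * (φ m).eval ζ)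
            + (z₀ * ((starRingEnd ℂ) ((φ m).eval ζ) * q.eval ζ)
            + ((starRingEnd ℂ) z₀ * ((starRingEnd ℂ) (q.eval ζ) * (φ m).eval ζ)
            + ((starRingEnd ℂ) z₀ * z₀) * ((starRingEnd ℂ) (q.eval ζ) * q.eval ζ))) := by
        intro ζ
        simp only [eval_add, eval_mul, eval_C, map_add, map_mul]
        ring
      simp_rw [expand]
      have cm : Continuous fun ζ : ℂ => (starRingEnd ℂ) ((φ m).eval ζ) :=
        continuous_star.comp (φ m).continuous
      have cq : Continuous fun ζ : ℂ => (starRingEnd ℂ) (q.eval ζ) :=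
        continuous_star.comp q.continuous
      have hI1 : Integrable (fun ζ => (starRingEnd ℂ) ((φ m).eval ζ) * (φ m).eval ζ) μ :=
        integrable_circ μ hcirc (cm.mul (φ m).continuous)
      have hI2 : Integrable (fun ζ => z₀ * ((starRingEnd ℂ) ((φ m).eval ζ) * q.eval ζ)) μ :=
        integrable_circ μ hcirc (continuous_const.mul (cm.mul q.continuous))
      have hI3 : Integrable (fun ζ => (starRingEnd ℂ) z₀ * ((starRingEnd ℂ) (q.eval ζ) * (φ m).eval ζ)) μ :=
        integrable_circ μ hcirc (continuous_const.mul (cq.mul (φ m).continuous))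
      have hI4 : Integrable (fun ζ => ((starRingEnd ℂ) z₀ * z₀) * ((starRingEnd ℂ) (q.eval ζ) * q.eval ζ)) μ :=
        integrable_circ μ hcirc (continuous_const.mul (cq.mul q.continuous))
      have hI34 : Integrable (fun ζ => (starRingEnd ℂ) z₀ * ((starRingEnd ℂ) (q.eval ζ) * (φ m).eval ζ)
          + ((starRingEnd ℂ) z₀ * z₀) * ((starRingEnd ℂ) (q.eval ζ) * q.eval ζ)) μ := hI3.add hI4
      have hI234 : Integrable (fun ζ => z₀ * ((starRingEnd ℂ) ((φ m).eval ζ) * q.eval ζ)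
          + ((starRingEnd ℂ) z₀ * ((starRingEnd ℂ) (q.eval ζ) * (φ m).eval ζ)
          + ((starRingEnd ℂ) z₀ * z₀) * ((starRingEnd ℂ) (q.eval ζ) * q.eval ζ))) μ := hI2.add hI34
      rw [integral_add hI1 hI234, integral_add hI2 hI34,
        integral_add hI3 hI4, integral_const_mul, integral_const_mul, integral_const_mul,
        hon m m, if_pos rfl, horth1, horth2, ← ht]
      have : (starRingEnd ℂ) z₀ * z₀ = ((normSq z₀ : ℝ) : ℂ) := by
        rw [← Complex.normSq_eq_conj_mul_self]
      rw [this]; ring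
    rw [e1] at e2; exact e2
  -- t is a nonneg real
  have htr : t = ((∫ ζ, normSq (q.eval ζ) ∂μ : ℝ) : ℂ) := by
    rw [ht]
    simp_rw [← Complex.normSq_eq_conj_mul_self]
    exact integral_ofReal
  set tr : ℝ := ∫ ζ, normSq (q.eval ζ) ∂μ with htrdef
  have htrpos : 0 ≤ tr := integral_nonneg (fun ζ => normSq_nonneg _)
  have hns : 1 ≤ normSq z₀ := by
    rw [Complex.normSq_eq_norm_sq]
    nlinarith
  -- derive contradiction
  rw [htr] at key
  have keyr : tr = 1 + normSq z₀ * tr := by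
    exact_mod_cast key
  nlinarith

lemma uniqueness_aux (μ : Measure ℂ) [IsFiniteMeasure μ] (hcirc : ∀ᵐ ζ ∂μ, ‖ζ‖ = 1)
    (φ : ℕ → Polynomial ℂ) (hφd : ∀ k, (φ k).degree = k)
    (hon : ∀ m n, ∫ ζ, (starRingEnd ℂ) ((φ m).eval ζ) * (φ n).eval ζ ∂μ =
      if m = n then 1 else 0)
    (w : ℂ) (hw : ‖w‖ ≤ 1) (n : ℕ) (Q : Polynomial ℂ) (hdeg : Q.degree ≤ n)
    (h : ∀ s : ℕ, s ≤ n →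
      ∫ ζ, ((starRingEnd ℂ) ζ) ^ s * Q.eval ζ * (1 - (starRingEnd ℂ) w * ζ) ∂μ = 0) :
    Q = 0 := by
  set u : Polynomial ℂ := 1 - C ((starRingEnd ℂ) w) * X with hu
  have hudeg : u.degree ≤ 1 := by
    refine (degree_sub_le _ _).trans (max_le ?_ ?_)
    · exact degree_one_le.trans (by norm_num)
    · exact (degree_mul_le _ _).trans (by
        calc (C ((starRingEnd ℂ) w)).degree + X.degree ≤ 0 + 1 :=
          add_le_add degree_C_le degree_X_le
        _ = 1 := by norm_num)
  have huev : ∀ ζ : ℂ, u.eval ζ = 1 - (starRingEnd ℂ) w * ζ := by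
    intro ζ; simp [hu]
  set R : Polynomial ℂ := Q * u with hR
  have hRev : ∀ ζ : ℂ, R.eval ζ = Q.eval ζ * (1 - (starRingEnd ℂ) w * ζ) := by
    intro ζ; rw [hR, eval_mul, huev]
  have hRdeg : R.degree ≤ (n + 1 : ℕ) := by
    refine (degree_mul_le _ _).trans ?_
    calc Q.degree + u.degree ≤ (n : WithBot ℕ) + 1 := add_le_add hdeg hudeg
    _ = ((n + 1 : ℕ) : WithBot ℕ) := by norm_cast
  obtain ⟨a, haR⟩ := mem_span_aux φ hφd (n+1) R hRdeg
  -- each low coefficient vanishes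
  have hzero : ∀ j, j ≤ n → a j = 0 := by
    intro j hj
    have h1 := int_phi_sum μ hcirc φ hon j (n+1) a
    rw [← haR, if_pos (Finset.mem_range.mpr (by omega))] at h1
    rw [← h1]
    have heval : ∀ ζ : ℂ, (starRingEnd ℂ) ((φ j).eval ζ) * R.eval ζ
        = ∑ s ∈ Finset.range (j+1), (starRingEnd ℂ) ((φ j).coeff s) *
            (((starRingEnd ℂ) ζ) ^ s * Q.eval ζ * (1 - (starRingEnd ℂ) w * ζ)) := by
      intro ζ
      have hev : (φ j).eval ζ = ∑ s ∈ Finset.range (j+1), (φ j).coeff s * ζ ^ s := by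
        have := eval_eq_sum_range (p := φ j) ζ
        rwa [natDegree_eq_of_degree_eq_some (hφd j)] at this
      rw [hev, map_sum, Finset.sum_mul]
      apply Finset.sum_congr rfl
      intro s _
      rw [hRev, map_mul, map_pow]
      ring
    simp_rw [heval]
    rw [integral_finset_sum]
    · refine Finset.sum_eq_zero fun s hs => ?_
      rw [integral_const_mul, h s (by simp at hs; omega), mul_zero]
    · intro s _
      exact integrable_circ μ hcirc (by continuity)
  have hRphi : R = a (n+1) • φ (n+1) := by
    rw [haR, Finset.sum_range_succ]
    rw [Finset.sum_eq_zero fun j hj => by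
      rw [hzero j (by simp at hj; omega), zero_smul], zero_add]
  have han1 : a (n+1) = 0 := by
    by_contra hcon
    by_cases hw0 : w = 0
    · have hQR : R = Q := by rw [hR, hu, hw0]; simp
      have h1 : R.degree = ((n+1 : ℕ) : WithBot ℕ) := by
        rw [hRphi, smul_eq_C_mul, degree_C_mul hcon, hφd (n+1)]
      rw [hQR] at h1
      rw [h1] at hdeg
      exact absurd (by exact_mod_cast hdeg) (by omega)
    · have hwc : (starRingEnd ℂ) w ≠ 0 := by
        simpa using hw0
      set z₀ : ℂ := ((starRingEnd ℂ) w)⁻¹ with hz₀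
      have hRz : R.eval z₀ = 0 := by
        rw [hRev, hz₀, mul_inv_cancel₀ hwc, sub_self, mul_zero]
      have hzn : 1 ≤ ‖z₀‖ := by
        rw [hz₀, norm_inv]
        have : ‖(starRingEnd ℂ) w‖ = ‖w‖ := by simp
        rw [this]
        have hwpos : 0 < ‖w‖ := norm_pos_iff.mpr hw0
        rw [le_inv_comm₀ one_pos hwpos]
        simpa using hw
      have hφz := phi_eval_ne_outside μ hcirc φ hφd hon (n+1) (by omega) z₀ hzn
      rw [hRphi] at hRz
      simp only [eval_smul, smul_eq_mul] at hRz
      exact hφz (by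
        rcases mul_eq_zero.mp hRz with h | h
        · exact absurd h hcon
        · exact h)
  have hR0 : R = 0 := by rw [hRphi, han1, zero_smul]
  have hune : u ≠ 0 := fun h => by
    have := huev 0
    rw [h] at this
    simp at this
  rcases mul_eq_zero.mp (hR.symm.trans hR0 : Q * u = 0) with h | h
  · exact h
  · exact absurd h hune

lemma int_conj_pow_K (μ : Measure ℂ) [IsFiniteMeasure μ] (hcirc : ∀ᵐ ζ ∂μ, ‖ζ‖ = 1)
    (φ : ℕ → Polynomial ℂ) (hφd : ∀ k, (φ k).degree = k)
    (hon : ∀ m n, ∫ ζ, (starRingEnd ℂ) ((φ m).eval ζ) * (φ n).eval ζ ∂μ =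
      if m = n then 1 else 0)
    (w : ℂ) (n s : ℕ) (hs : s ≤ n) :
    ∫ ζ, ((starRingEnd ℂ) ζ) ^ s *
        (∑ j ∈ Finset.range (n+1), ((starRingEnd ℂ) ((φ j).eval w)) • φ j).eval ζ ∂μ
      = ((starRingEnd ℂ) w) ^ s := by
  obtain ⟨b, hb⟩ := mem_span_aux φ hφd s (X ^ s) (by rw [degree_X_pow])
  -- integral of conj (X^s) against each φ j
  have hXs : ∀ j : ℕ, ∫ ζ, (starRingEnd ℂ) (((X : Polynomial ℂ) ^ s).eval ζ) * (φ j).eval ζ ∂μ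
      = (starRingEnd ℂ) (if j ∈ Finset.range (s+1) then b j else 0) := by
    intro j
    rw [int_swap, hb, int_phi_sum μ hcirc φ hon j s b]
  have hXev : ∀ ζ : ℂ, ((starRingEnd ℂ) ζ) ^ s = (starRingEnd ℂ) (((X : Polynomial ℂ) ^ s).eval ζ) := by
    intro ζ; rw [eval_pow, eval_X, map_pow]
  have heval : ∀ ζ : ℂ, ((starRingEnd ℂ) ζ) ^ s *
        (∑ j ∈ Finset.range (n+1), ((starRingEnd ℂ) ((φ j).eval w)) • φ j).eval ζ
      = ∑ j ∈ Finset.range (n+1), (starRingEnd ℂ) ((φ j).eval w) *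
          ((starRingEnd ℂ) (((X : Polynomial ℂ) ^ s).eval ζ) * (φ j).eval ζ) := by
    intro ζ
    rw [eval_finset_sum, Finset.mul_sum]
    apply Finset.sum_congr rfl
    intro j _
    rw [eval_smul, hXev ζ, smul_eq_mul]
    ring
  simp_rw [heval]
  rw [integral_finset_sum _ (fun j _ => integrable_circ μ hcirc (by continuity))]
  have hterm : ∀ j ∈ Finset.range (n+1),
      ∫ ζ, (starRingEnd ℂ) ((φ j).eval w) *
          ((starRingEnd ℂ) (((X : Polynomial ℂ) ^ s).eval ζ) * (φ j).eval ζ) ∂μ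
        = (starRingEnd ℂ) ((if j ∈ Finset.range (s+1) then b j else 0) * (φ j).eval w) := by
    intro j _
    rw [integral_const_mul, hXs j, map_mul]
    ring
  rw [Finset.sum_congr rfl hterm, ← map_sum]
  have : ∑ j ∈ Finset.range (n+1), (if j ∈ Finset.range (s+1) then b j else 0) * (φ j).eval w
      = w ^ s := by
    simp_rw [ite_mul, zero_mul]
    rw [Finset.sum_ite_mem,
      (by ext x; simp; omega : Finset.range (n+1) ∩ Finset.range (s+1) = Finset.range (s+1))]
    have := congrArg (eval w) hb
    rw [eval_pow, eval_X, eval_finset_sum] at this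
    simp_rw [eval_smul, smul_eq_mul] at this
    exact this.symm
  rw [this, map_pow]

lemma cont_aux (p : Polynomial ℂ) (s : ℕ) (w : ℂ) :
    Continuous fun ζ : ℂ => ((starRingEnd ℂ) ζ) ^ s * p.eval ζ * (1 - (starRingEnd ℂ) w * ζ) :=
  ((continuous_star.pow s).mul p.continuous).mul
    (continuous_const.sub (continuous_const.mul continuous_id))

lemma K_orth (μ : Measure ℂ) [IsFiniteMeasure μ] (hcirc : ∀ᵐ ζ ∂μ, ‖ζ‖ = 1)
    (φ : ℕ → Polynomial ℂ) (hφd : ∀ k, (φ k).degree = k)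
    (hon : ∀ m n, ∫ ζ, (starRingEnd ℂ) ((φ m).eval ζ) * (φ n).eval ζ ∂μ =
      if m = n then 1 else 0)
    (w : ℂ) (n s : ℕ) (hs1 : 1 ≤ s) (hsn : s ≤ n) :
    ∫ ζ, ((starRingEnd ℂ) ζ) ^ s *
        (∑ j ∈ Finset.range (n+1), ((starRingEnd ℂ) ((φ j).eval w)) • φ j).eval ζ
        * (1 - (starRingEnd ℂ) w * ζ) ∂μ = 0 := by
  set Kp : Polynomial ℂ := ∑ j ∈ Finset.range (n+1), ((starRingEnd ℂ) ((φ j).eval w)) • φ j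
    with hKp
  obtain ⟨r, rfl⟩ : ∃ r, s = r + 1 := ⟨s - 1, by omega⟩
  have hae : ∀ᵐ ζ ∂μ, ((starRingEnd ℂ) ζ) ^ (r+1) * Kp.eval ζ * (1 - (starRingEnd ℂ) w * ζ)
      = ((starRingEnd ℂ) ζ) ^ (r+1) * Kp.eval ζ
        - (starRingEnd ℂ) w * (((starRingEnd ℂ) ζ) ^ r * Kp.eval ζ) := by
    filter_upwards [hcirc] with ζ hζ
    have hns1 : normSq ζ = 1 := by
      rw [Complex.normSq_eq_norm_sq, hζ]; norm_num
    have h1 : (starRingEnd ℂ) ζ * ζ = 1 := by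
      rw [← Complex.normSq_eq_conj_mul_self, hns1, Complex.ofReal_one]
    calc ((starRingEnd ℂ) ζ) ^ (r+1) * Kp.eval ζ * (1 - (starRingEnd ℂ) w * ζ)
        = ((starRingEnd ℂ) ζ) ^ (r+1) * Kp.eval ζ
          - (starRingEnd ℂ) w * ((((starRingEnd ℂ) ζ * ζ) * ((starRingEnd ℂ) ζ) ^ r) * Kp.eval ζ) := by
          ring
      _ = _ := by rw [h1, one_mul]
  have hI1 : Integrable (fun ζ : ℂ => ((starRingEnd ℂ) ζ) ^ (r+1) * Kp.eval ζ) μ :=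
    integrable_circ μ hcirc ((continuous_star.pow (r+1)).mul Kp.continuous)
  have hI2 : Integrable (fun ζ : ℂ =>
      (starRingEnd ℂ) w * (((starRingEnd ℂ) ζ) ^ r * Kp.eval ζ)) μ :=
    integrable_circ μ hcirc (continuous_const.mul ((continuous_star.pow r).mul Kp.continuous))
  rw [integral_congr_ae hae, integral_sub hI1 hI2, integral_const_mul,
    int_conj_pow_K μ hcirc φ hφd hon w n (r+1) hsn,
    int_conj_pow_K μ hcirc φ hφd hon w n r (by omega)]
  rw [pow_succ]
  ring

/-- Characterization of the CD kernel for `|w| ≤ 1`: any polynomial of degree at most `n`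
satisfying the orthogonality relations and having nonzero total `μ_w`-integral is a
nonzero constant multiple of `K_n(·,w;μ)`. -/
theorem cd_kernel_characterization_inside
    (μ : Measure ℂ) [IsFiniteMeasure μ]
    (hcirc : ∀ᵐ ζ ∂μ, ‖ζ‖ = 1)
    (hnt : Set.Infinite {ζ : ℂ | ∀ ε > 0, μ (Metric.ball ζ ε) ≠ 0})
    (φ : ℕ → Polynomial ℂ) (hφ : IsOPUC μ φ)
    (w : ℂ) (hw : ‖w‖ ≤ 1) (n : ℕ)
    (P : Polynomial ℂ) (hdeg : P.degree ≤ n)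
    (horth : ∀ s : ℕ, 1 ≤ s → s ≤ n →
      ∫ ζ, ((starRingEnd ℂ) ζ) ^ s * P.eval ζ * (1 - (starRingEnd ℂ) w * ζ) ∂μ = 0)
    (hne : ∫ ζ, P.eval ζ * (1 - (starRingEnd ℂ) w * ζ) ∂μ ≠ 0) :
    ∃ c : ℂ, c ≠ 0 ∧ ∀ z : ℂ, P.eval z = c * CDkernel φ n z w := by
  obtain ⟨hφd, hφlc, hon⟩ := hφ
  set Kp : Polynomial ℂ := ∑ j ∈ Finset.range (n+1), ((starRingEnd ℂ) ((φ j).eval w)) • φ j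
    with hKp
  have hKev : ∀ z : ℂ, Kp.eval z = CDkernel φ n z w := by
    intro z
    rw [hKp, eval_finset_sum, CDkernel]
    apply Finset.sum_congr rfl
    intro j _
    rw [eval_smul, smul_eq_mul]
  have hKdeg : Kp.degree ≤ n := by
    refine (degree_sum_le _ _).trans ?_
    rw [Finset.sup_le_iff]
    intro j hj
    refine (degree_smul_le _ _).trans ?_
    rw [hφd j]
    exact_mod_cast Nat.lt_succ_iff.mp (Finset.mem_range.mp hj)
  set α : ℂ := ∫ ζ, Kp.eval ζ * (1 - (starRingEnd ℂ) w * ζ) ∂μ with hα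
  set β : ℂ := ∫ ζ, P.eval ζ * (1 - (starRingEnd ℂ) w * ζ) ∂μ with hβ
  -- the difference polynomial satisfies all orthogonality relations
  set Q : Polynomial ℂ := α • P - β • Kp with hQ
  have hQdeg : Q.degree ≤ n :=
    (degree_sub_le _ _).trans (max_le ((degree_smul_le _ _).trans hdeg)
      ((degree_smul_le _ _).trans hKdeg))
  have hQorth : ∀ s : ℕ, s ≤ n →
      ∫ ζ, ((starRingEnd ℂ) ζ) ^ s * Q.eval ζ * (1 - (starRingEnd ℂ) w * ζ) ∂μ = 0 := by
    intro s hs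
    have hexp : ∀ ζ : ℂ, ((starRingEnd ℂ) ζ) ^ s * Q.eval ζ * (1 - (starRingEnd ℂ) w * ζ)
        = α * (((starRingEnd ℂ) ζ) ^ s * P.eval ζ * (1 - (starRingEnd ℂ) w * ζ))
          - β * (((starRingEnd ℂ) ζ) ^ s * Kp.eval ζ * (1 - (starRingEnd ℂ) w * ζ)) := by
      intro ζ
      rw [hQ, eval_sub, eval_smul, eval_smul, smul_eq_mul, smul_eq_mul]
      ring
    simp_rw [hexp]
    rw [integral_sub (integrable_circ (g := fun ζ => α * (((starRingEnd ℂ) ζ) ^ s * P.eval ζ * (1 - (starRingEnd ℂ) w * ζ))) μ hcirc (continuous_const.mul (cont_aux P s w)))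
      (integrable_circ (g := fun ζ => β * (((starRingEnd ℂ) ζ) ^ s * Kp.eval ζ * (1 - (starRingEnd ℂ) w * ζ))) μ hcirc (continuous_const.mul (cont_aux Kp s w))),
      integral_const_mul, integral_const_mul]
    rcases Nat.eq_zero_or_pos s with h0 | hpos
    · subst h0
      simp only [pow_zero, one_mul]
      rw [← hβ, ← hα, mul_comm]
      ring
    · rw [horth s hpos hs, K_orth μ hcirc φ hφd hon w n s hpos hs]
      ring
  have hQ0 : Q = 0 := uniqueness_aux μ hcirc φ hφd hon w hw n Q hQdeg hQorth
  have hmain : α • P = β • Kp := by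
    have := sub_eq_zero.mp (hQ.symm.trans hQ0)
    exact this
  -- Kp is nonzero since its value at w is positive
  have hKw : (Kp.eval w).re > 0 ∧ (Kp.eval w).im = 0 := by
    have hev : Kp.eval w = ((∑ j ∈ Finset.range (n+1), normSq ((φ j).eval w) : ℝ) : ℂ) := by
      rw [hKp, eval_finset_sum]
      push_cast
      apply Finset.sum_congr rfl
      intro j _
      rw [eval_smul, smul_eq_mul, ← Complex.normSq_eq_conj_mul_self]
    constructor
    · rw [hev]
      simp only [Complex.ofReal_re]
      apply Finset.sum_pos'
      · intro j _; exact normSq_nonneg _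
      · refine ⟨0, Finset.mem_range.mpr (by omega), ?_⟩
        have h0 : (φ 0).eval w = (φ 0).coeff 0 := by
          rw [eq_C_of_degree_le_zero (le_of_eq (hφd 0))]
          simp
        rw [h0]
        exact normSq_pos.mpr (phi_coeff_ne φ hφd 0)
    · rw [hev]; simp
  have hKne : Kp ≠ 0 := by
    intro h
    rw [h] at hKw
    simp at hKw
  have hαne : α ≠ 0 := by
    intro h
    rw [h, zero_smul] at hmain
    rcases smul_eq_zero.mp hmain.symm with h' | h'
    · exact hne (hβ ▸ h')
    · exact hKne h'
  refine ⟨β / α, div_ne_zero (hβ ▸ hne) hαne, ?_⟩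
  intro z
  have := congrArg (eval z) hmain
  rw [eval_smul, eval_smul, smul_eq_mul, smul_eq_mul] at this
  rw [← hKev z]
  field_simp
  linear_combination this
end

section
/- Let α, τ ∈ ℂ with |α| < 1, |τ| = 1, and define c = Im(τα)/(Re(τα) − 1), g = (1/2)|1 − τα|²/(1 − Re(τα)), and τ' = ((1 − ic)/(1 + ic))·τ. Then α = (1/τ)·(1 − 2g − ic)/(1 − ic) and (τ − ᾱ)/(1 − τα) = τ'. -/
open Complex

/-- Inverse formula: with `c = Im(τα)/(Re(τα) - 1)`, `g = (1/2)|1 - τα|²/(1 - Re(τα))` and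
`τ' = ((1 - ic)/(1 + ic))τ`, one recovers `α = (1/τ)(1 - 2g - ic)/(1 - ic)` and
`(τ - ᾱ)/(1 - τα) = τ'`. -/
theorem inverse_parametrization_formula
    (α τ : ℂ) (hα : ‖α‖ < 1) (hτ : ‖τ‖ = 1)
    (c g : ℝ)
    (hc : c = (τ * α).im / ((τ * α).re - 1))
    (hg : g = (1 / 2) * ‖1 - τ * α‖ ^ 2 / (1 - (τ * α).re))
    (τ' : ℂ) (hτ' : τ' = ((1 - c * I) / (1 + c * I)) * τ) :
    α = (1 / τ) * ((1 - 2 * g - c * I) / (1 - c * I)) ∧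
      (τ - (starRingEnd ℂ) α) / (1 - τ * α) = τ' := by
  set w := τ * α with hw
  have hτ0 : τ ≠ 0 := by
    intro h; rw [h] at hτ; simp at hτ
  have hwn : ‖w‖ < 1 := by
    rw [hw, norm_mul, hτ, one_mul]; exact hα
  have hre : |w.re| < 1 := lt_of_le_of_lt (Complex.abs_re_le_norm w) hwn
  have hr : 0 < 1 - w.re := by
    have := (abs_lt.mp hre).2; linarith
  have hrne : (1 - w.re : ℝ) ≠ 0 := ne_of_gt hr
  have hrC : ((1 - w.re : ℝ) : ℂ) ≠ 0 := by exact_mod_cast hrne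
  have hc' : c * (1 - w.re) = - w.im := by
    have h2 : (w.re - 1 : ℝ) ≠ 0 := by intro h; apply hrne; linarith
    rw [hc]; field_simp; ring
  have hg' : 2 * g * (1 - w.re) = (1 - w.re) ^ 2 + w.im ^ 2 := by
    have hn : ‖(1 : ℂ) - w‖ ^ 2 = (1 - w.re) ^ 2 + w.im ^ 2 := by
      rw [Complex.sq_norm]
      simp [Complex.normSq_apply]
      ring
    rw [hg, hn]; field_simp
  have hA : ((1 - w.re : ℝ) : ℂ) * (1 - (c : ℂ) * I) = 1 - (starRingEnd ℂ) w := by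
    apply Complex.ext <;>
      simp [Complex.mul_re, Complex.mul_im] <;> linarith [hc']
  have hB : ((1 - w.re : ℝ) : ℂ) * (1 + (c : ℂ) * I) = 1 - w := by
    apply Complex.ext <;>
      simp [Complex.mul_re, Complex.mul_im] <;> linarith [hc']
  have hC : ((1 - w.re : ℝ) : ℂ) * (1 - 2 * (g : ℂ) - (c : ℂ) * I) =
      w * (1 - (starRingEnd ℂ) w) := by
    apply Complex.ext <;>
      simp [Complex.mul_re, Complex.mul_im] <;> nlinarith [hc', hg']
  have h1w : (1 : ℂ) - w ≠ 0 := by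
    intro h
    have : w = 1 := by linear_combination -h
    rw [this] at hwn; simp at hwn
  have h1c : (1 : ℂ) - (c : ℂ) * I ≠ 0 := by
    intro h
    have : (1 : ℂ) - (starRingEnd ℂ) w = 0 := by rw [← hA, h, mul_zero]
    have hw1 : (starRingEnd ℂ) w = 1 := by linear_combination -this
    have : w = 1 := by
      have := congrArg (starRingEnd ℂ) hw1
      simpa using this
    rw [this] at hwn; simp at hwn
  have h1cp : (1 : ℂ) + (c : ℂ) * I ≠ 0 := by
    intro h
    have : (1 : ℂ) - w = 0 := by rw [← hB, h, mul_zero]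
    exact h1w this
  have hττ : τ * (starRingEnd ℂ) τ = 1 := by
    rw [Complex.mul_conj]
    have : Complex.normSq τ = 1 := by
      rw [← Complex.sq_norm, hτ]; norm_num
    exact_mod_cast this
  have hconjα : (starRingEnd ℂ) α = τ * (starRingEnd ℂ) w := by
    rw [hw, map_mul, ← mul_assoc, hττ, one_mul]
  constructor
  · have key : (1 - 2 * (g : ℂ) - (c : ℂ) * I) = w * (1 - (c : ℂ) * I) := by
      apply mul_left_cancel₀ hrC
      rw [hC]
      linear_combination -(w * hA)
    rw [key, mul_div_assoc, div_self h1c, mul_one, hw]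
    field_simp
  · have e2 : ((1 : ℂ) - (c : ℂ) * I) / (1 + (c : ℂ) * I) =
        (1 - (starRingEnd ℂ) w) / (1 - w) := by
      rw [div_eq_div_iff h1cp h1w]
      apply mul_left_cancel₀ hrC
      linear_combination (1 - w) * hA - ((1 : ℂ) - (starRingEnd ℂ) w) * hB
    have ht : τ - (starRingEnd ℂ) α = τ * (1 - (starRingEnd ℂ) w) := by
      rw [hconjα]; ring
    rw [hτ', e2, ht]
    ring
end

section
/- Let (R_n) satisfy R_{−1} = 0, R_0 = 1, and R_{n+1}(z) = [(1 + ic_{n+1})z + (1 − ic_{n+1})] R_n(z) − 4 d_{n+1} z R_{n−1}(z) with c_n real and d_{n+1} real. Then each R_n is conjugate-reciprocal: z^n conj(R_n(1/z̄)) = R_n(z), i.e., the coefficient vector of R_n satisfies a_k = conj(a_{n−k}). -/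
open Complex Polynomial

private lemma reflect_sub' {N : ℕ} (f g : Polynomial ℂ) :
    reflect N (f - g) = reflect N f - reflect N g := by
  ext i
  simp [coeff_reflect, coeff_sub]

/-- Each `R_n` from the three-term recurrence with real coefficients is
conjugate-reciprocal: `zⁿ conj(R_n(1/z̄)) = R_n(z)`, equivalently the coefficients
satisfy `a_k = conj(a_{n-k})`. -/
theorem kernel_recurrence_conjugate_reciprocal
    (c : ℕ → ℝ) (d : ℕ → ℝ)
    (R : ℕ → Polynomial ℂ)
    (hR0 : R 0 = 1)
    (hR1 : R 1 = C (1 + (c 1 : ℂ) * I) * X + C (1 - (c 1 : ℂ) * I))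
    (hrec : ∀ n, R (n + 2) =
      (C (1 + (c (n + 2) : ℂ) * I) * X + C (1 - (c (n + 2) : ℂ) * I)) * R (n + 1)
        - C (4 * (d (n + 2) : ℂ)) * X * R n) :
    ∀ n, (∀ z : ℂ, z ≠ 0 →
        z ^ n * (starRingEnd ℂ) ((R n).eval (1 / (starRingEnd ℂ) z)) = (R n).eval z) ∧
      (∀ k : ℕ, k ≤ n → (R n).coeff k = (starRingEnd ℂ) ((R n).coeff (n - k))) := by
  -- key structural claim, by strong (two-step) induction
  have key : ∀ n, (R n).natDegree ≤ n ∧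
      reflect n (R n) = (R n).map (starRingEnd ℂ) := by
    intro n
    induction n using Nat.strong_induction_on with
    | _ n ih =>
      match n with
      | 0 =>
        constructor
        · simp [hR0]
        · simp [hR0, reflect_one]
      | 1 =>
        have hconj1 : (starRingEnd ℂ) (1 + (c 1 : ℂ) * I) = 1 - (c 1 : ℂ) * I := by
          rw [map_add, map_mul, Complex.conj_ofReal, Complex.conj_I, map_one]
          ring
        have hconj2 : (starRingEnd ℂ) (1 - (c 1 : ℂ) * I) = 1 + (c 1 : ℂ) * I := by
          rw [map_sub, map_mul, Complex.conj_ofReal, Complex.conj_I, map_one]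
          ring
        constructor
        · rw [hR1]
          refine le_trans (natDegree_add_le _ _) (max_le ?_ ?_)
          · exact le_trans natDegree_mul_le
              (by rw [natDegree_C, natDegree_X])
          · exact le_trans (natDegree_C _).le (by omega)
        · rw [hR1, reflect_add, reflect_C_mul, reflect_one_X, reflect_C]
          rw [Polynomial.map_add, Polynomial.map_mul, Polynomial.map_C, Polynomial.map_C,
            Polynomial.map_X, hconj1, hconj2]
          ring
      | (m + 2) =>
        obtain ⟨hd1, hr1⟩ := ih (m + 1) (by omega)
        obtain ⟨hd0, hr0⟩ := ih m (by omega)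
        have hca : (starRingEnd ℂ) (1 + (c (m + 2) : ℂ) * I) = 1 - (c (m + 2) : ℂ) * I := by
          rw [map_add, map_mul, Complex.conj_ofReal, Complex.conj_I, map_one]
          ring
        have hcb : (starRingEnd ℂ) (1 - (c (m + 2) : ℂ) * I) = 1 + (c (m + 2) : ℂ) * I := by
          rw [map_sub, map_mul, Complex.conj_ofReal, Complex.conj_I, map_one]
          ring
        have hcd : (starRingEnd ℂ) (4 * (d (m + 2) : ℂ)) = 4 * (d (m + 2) : ℂ) := by
          have h4 : ((4 : ℂ)) = ((4 : ℝ) : ℂ) := by norm_num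
          rw [map_mul, h4, Complex.conj_ofReal, Complex.conj_ofReal]
        have hA : (C (1 + (c (m + 2) : ℂ) * I) * X + C (1 - (c (m + 2) : ℂ) * I)).natDegree ≤ 1 := by
          refine le_trans (natDegree_add_le _ _) (max_le ?_ ?_)
          · exact le_trans natDegree_mul_le
              (by rw [natDegree_C, natDegree_X])
          · exact le_trans (natDegree_C _).le (by omega)
        have hB : (C (4 * (d (m + 2) : ℂ)) * X).natDegree ≤ 2 :=
          le_trans natDegree_mul_le (by rw [natDegree_C, natDegree_X]; omega)
        constructor
        · rw [hrec m]
          refine le_trans (natDegree_sub_le _ _) (max_le ?_ ?_)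
          · exact le_trans natDegree_mul_le
              (le_trans (Nat.add_le_add hA hd1) (by omega))
          · exact le_trans natDegree_mul_le
              (le_trans (Nat.add_le_add hB hd0) (by omega))
        · rw [hrec m, reflect_sub']
          have e1 : reflect (m + 2)
              ((C (1 + (c (m + 2) : ℂ) * I) * X + C (1 - (c (m + 2) : ℂ) * I)) * R (m + 1))
              = reflect 1 (C (1 + (c (m + 2) : ℂ) * I) * X + C (1 - (c (m + 2) : ℂ) * I))
                * reflect (m + 1) (R (m + 1)) := by
            have h := reflect_mul
              (C (1 + (c (m + 2) : ℂ) * I) * X + C (1 - (c (m + 2) : ℂ) * I)) (R (m + 1)) hA hd1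
            rw [show 1 + (m + 1) = m + 2 from by omega] at h
            exact h
          have e2 : reflect (m + 2) (C (4 * (d (m + 2) : ℂ)) * X * R m)
              = reflect 2 (C (4 * (d (m + 2) : ℂ)) * X) * reflect m (R m) := by
            have h := reflect_mul (C (4 * (d (m + 2) : ℂ)) * X) (R m) hB hd0
            rw [show 2 + m = m + 2 from by omega] at h
            exact h
          have eA : reflect 1 (C (1 + (c (m + 2) : ℂ) * I) * X + C (1 - (c (m + 2) : ℂ) * I))
              = C (1 - (c (m + 2) : ℂ) * I) * X + C (1 + (c (m + 2) : ℂ) * I) := by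
            rw [reflect_add, reflect_C_mul, reflect_one_X, reflect_C]
            ring
          have eB : reflect 2 (C (4 * (d (m + 2) : ℂ)) * X)
              = C (4 * (d (m + 2) : ℂ)) * X := by
            rw [show (X : Polynomial ℂ) = X ^ 1 from (pow_one X).symm, reflect_C_mul_X_pow]
            norm_num
          rw [e1, e2, eA, eB, hr1, hr0]
          simp only [Polynomial.map_sub, Polynomial.map_mul, Polynomial.map_add,
            Polynomial.map_C, Polynomial.map_X, hca, hcb, hcd]
  intro n
  obtain ⟨hdeg, hrefl⟩ := key n
  constructor
  · intro z hz
    have hinv : Invertible z := invertibleOfNonzero hz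
    have heval := eval₂_reflect_mul_pow (RingHom.id ℂ) z n (R n) hdeg
    have hiz : (⅟ z : ℂ) = z⁻¹ := invOf_eq_inv z
    have hc : (starRingEnd ℂ) ((R n).eval (1 / (starRingEnd ℂ) z))
        = ((R n).map (starRingEnd ℂ)).eval (z⁻¹) := by
      rw [eval_map]
      have h1 : (z : ℂ)⁻¹ = (starRingEnd ℂ) (1 / (starRingEnd ℂ) z) := by
        simp [map_div₀]
      rw [h1, eval₂_at_apply]
    rw [hc, ← hrefl]
    rw [hiz, eval₂_eq_eval_map, Polynomial.map_id] at heval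
    rw [mul_comm]
    exact heval
  · intro k hk
    have h1 : (R n).coeff (n - k) = (starRingEnd ℂ) ((R n).coeff k) := by
      have := congrArg (fun p => Polynomial.coeff p k) hrefl
      simpa [coeff_reflect, revAt_le hk, coeff_map] using this
    rw [h1, Complex.conj_conj]
end
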